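/- arXiv:2205.00527 — 4 statements merged into one kernel-verified Lean document; each statement's English description precedes it below -/
import Mathlib

section
/- For every nonnegative integer n, the number of partitions into distinct parts π = (λ1, λ2, …) with O(π) = n equals the number of (ordinary) partitions of n. (Note that the set of partitions into distinct parts with O(π) = n is finite, since all parts are at most λ1 ≤ n.) -/
/-- Sum of `f` over the entries of a list at even 0-based positions, i.e. over the
odd-indexed parts `λ1, λ3, λ5, …` of a partition `(λ1, λ2, λ3, …)`. -/
def sumAlt (f : ℕ → ℕ) : List ℕ → ℕ
  | [] => 0
  | [a] => f a
  | a :: _ :: l => f a + sumAlt f l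

/-- `O(π) = λ1 + λ3 + λ5 + ⋯`, the sum of the odd-indexed parts. -/
def Osum (l : List ℕ) : ℕ := sumAlt id l

/-- `E(π) = λ2 + λ4 + λ6 + ⋯`, the sum of the even-indexed parts. -/
def Esum (l : List ℕ) : ℕ := sumAlt id l.tail

/-- `γ(π) = λ1 − λ2 + λ3 − λ4 + ⋯ = O(π) − E(π)`, the alternating sum of the parts.
For a weakly decreasing list we have `Osum l ≥ Esum l`, so natural subtraction is exact. -/
def gammaSum (l : List ℕ) : ℕ := Osum l - Esum l

/-- `⌈O⌉(π) = ∑ ⌈λ_{2i−1}/2⌉`. -/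
def ceilO (l : List ℕ) : ℕ := sumAlt (fun a => (a + 1) / 2) l

/-- `⌊O⌋(π) = ∑ ⌊λ_{2i−1}/2⌋`. -/
def floorO (l : List ℕ) : ℕ := sumAlt (fun a => a / 2) l

/-- `⌈E⌉(π) = ∑ ⌈λ_{2i}/2⌉`. -/
def ceilE (l : List ℕ) : ℕ := sumAlt (fun a => (a + 1) / 2) l.tail

/-- `⌊E⌋(π) = ∑ ⌊λ_{2i}/2⌋`. -/
def floorE (l : List ℕ) : ℕ := sumAlt (fun a => a / 2) l.tail

/-- A partition: a weakly decreasing finite list of positive integers. -/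
def IsPartition (l : List ℕ) : Prop := l.Pairwise (· ≥ ·) ∧ ∀ x ∈ l, 0 < x

/-- A partition into distinct parts: a strictly decreasing finite list of positive integers. -/
def IsDistinctPartition (l : List ℕ) : Prop := l.Pairwise (· > ·) ∧ ∀ x ∈ l, 0 < x

/-- The Gaussian binomial coefficient `[n choose k]_q` as a polynomial in `q`
(defined by the q-Pascal recurrence; it equals `(q;q)_n / ((q;q)_k (q;q)_{n−k})`). -/
noncomputable def qbinom : ℕ → ℕ → Polynomial ℤ
  | _, 0 => 1
  | 0, _ + 1 => 0
  | n + 1, k + 1 => qbinom n k + Polynomial.X ^ (k + 1) * qbinom n (k + 1)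

def phi : List ℕ → List ℕ
  | [] => []
  | [a] => List.replicate a 1
  | a :: b :: l =>
      (a - b + if 2 ≤ l.length then (phi l).headI else 1)
        :: (List.map (· + 1) (phi l) ++ List.replicate (b - l.headI - 1) 1)

def psi : List ℕ → List ℕ
  | [] => []
  | c :: m =>
      if c ≤ 1 then [m.length + 1]
      else
        (c + ((m.length - (m.takeWhile (fun x => 2 ≤ x)).length) + 1 +
              (psi ((m.takeWhile (fun x => 2 ≤ x)).map (· - 1))).headI)
           - if 2 ≤ (psi ((m.takeWhile (fun x => 2 ≤ x)).map (· - 1))).length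
             then (m.takeWhile (fun x => 2 ≤ x)).headI - 1 else 1)
        :: ((m.length - (m.takeWhile (fun x => 2 ≤ x)).length) + 1 +
              (psi ((m.takeWhile (fun x => 2 ≤ x)).map (· - 1))).headI)
        :: psi ((m.takeWhile (fun x => 2 ≤ x)).map (· - 1))
  termination_by m => m.length
  decreasing_by
    simp only [List.length_map, List.length_cons]
    exact Nat.lt_succ_of_le ((m.takeWhile_sublist _).length_le)

-- basic helpers

lemma osum_nil : Osum [] = 0 := rfl
lemma osum_single (a : ℕ) : Osum [a] = a := rfl
lemma osum_cons_cons (a b : ℕ) (l : List ℕ) : Osum (a :: b :: l) = a + Osum l := rfl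

lemma sorted_ge_head {l : List ℕ} (h : l.Pairwise (· ≥ ·)) {x : ℕ} (hx : x ∈ l) :
    x ≤ l.headI := by
  cases l with
  | nil => simp at hx
  | cons a t =>
    rcases List.mem_cons.1 hx with rfl | hx
    · simp
    · exact (List.pairwise_cons.1 h).1 _ hx

lemma sorted_gt_head {l : List ℕ} (h : l.Pairwise (· > ·)) {x : ℕ} (hx : x ∈ l) :
    x ≤ l.headI := by
  cases l with
  | nil => simp at hx
  | cons a t =>
    rcases List.mem_cons.1 hx with rfl | hx
    · simp
    · exact le_of_lt ((List.pairwise_cons.1 h).1 _ hx)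

lemma sorted_replicate (e x : ℕ) : (List.replicate e x).Pairwise (· ≥ ·) :=
  List.pairwise_replicate.2 (Or.inr le_rfl)

lemma sum_map_succ (l : List ℕ) : (List.map (· + 1) l).sum = l.sum + l.length := by
  induction l with
  | nil => simp
  | cons a t ih => simp [ih]; omega

lemma headI_lt_of_sorted_gt {b : ℕ} {l : List ℕ} (h : (b :: l).Pairwise (· > ·)) :
    l.headI < b ∨ l = [] := by
  cases l with
  | nil => exact Or.inr rfl
  | cons x t => exact Or.inl ((List.pairwise_cons.1 h).1 _ List.mem_cons_self)

lemma phi_ne_nil {l : List ℕ} (h : 2 ≤ l.length) : phi l ≠ [] := by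
  match l with
  | a :: b :: l => simp [phi]

theorem key1 : ∀ l : List ℕ, IsDistinctPartition l →
    IsPartition (phi l) ∧ (phi l).sum = Osum l ∧
    ((phi l).length + (if 2 ≤ l.length then (phi l).headI else 1) = l.headI + 1) ∧
    psi (phi l) = l := by
  intro l
  induction l using phi.induct with
  | case1 =>
    intro _
    refine ⟨⟨by simp [phi], by simp [phi]⟩, by simp [phi, Osum, sumAlt], by simp [phi], by simp [phi, psi]⟩
  | case2 a =>
    intro hD
    have ha : 0 < a := hD.2 a (by simp)
    have hphi : phi [a] = List.replicate a 1 := rfl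
    refine ⟨⟨by rw [hphi]; exact sorted_replicate a 1, ?_⟩, ?_, ?_, ?_⟩
    · intro x hx; rw [hphi] at hx; rw [List.eq_of_mem_replicate hx]; omega
    · rw [hphi, osum_single]; simp [List.sum_replicate]
    · rw [hphi]; simp
    · obtain ⟨a', rfl⟩ : ∃ a', a = a' + 1 := ⟨a - 1, by omega⟩
      rw [hphi, List.replicate_succ]
      simp [psi]
  | case3 a b l ih =>
    intro hD
    obtain ⟨hsort, hpos⟩ := hD
    rw [List.pairwise_cons] at hsort
    obtain ⟨hs1, hs2⟩ := hsort
    rw [List.pairwise_cons] at hs2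
    obtain ⟨hs3, hs4⟩ := hs2
    have hDl : IsDistinctPartition l := ⟨hs4, fun x hx => hpos x (by simp [hx])⟩
    obtain ⟨hPl, hsuml, hL0l, hpsil⟩ := ih hDl
    have hab : b < a := hs1 b (by simp)
    have hb1 : 0 < b := hpos b (by simp)
    have hlb : l.headI < b := by
      cases l with
      | nil => simpa using hb1
      | cons x t => exact hs3 x (by simp)
    set H := if 2 ≤ l.length then (phi l).headI else 1 with hHdef
    have hH1 : 1 ≤ H := by
      rw [hHdef]
      split
      · next h2 =>
        obtain ⟨p, ps, hpps⟩ := List.exists_cons_of_ne_nil (phi_ne_nil h2)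
        rw [hpps]
        exact hPl.2 p (by rw [hpps]; simp)
      · exact le_rfl
    have hyH : ∀ y ∈ phi l, y ≤ H := by
      rw [hHdef]
      split
      · intro y hy; exact sorted_ge_head hPl.1 hy
      · next h2 =>
        intro y hy
        rcases l with _ | ⟨r, _ | ⟨s, l'⟩⟩
        · simp [phi] at hy
        · have : y = 1 := List.eq_of_mem_replicate (by simpa [phi] using hy)
          omega
        · exact absurd (by simp) h2
    have hphi : phi (a :: b :: l) =
        (a - b + H) :: (List.map (· + 1) (phi l) ++ List.replicate (b - l.headI - 1) 1) := by
      rw [hHdef]; rfl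
    have hposphi : ∀ x ∈ phi (a :: b :: l), 0 < x := by
      rw [hphi]
      intro x hx
      rcases List.mem_cons.1 hx with rfl | hx
      · omega
      rcases List.mem_append.1 hx with hx | hx
      · obtain ⟨z, hz, rfl⟩ := List.mem_map.1 hx; omega
      · rw [List.eq_of_mem_replicate hx]; omega
    refine ⟨⟨?_, hposphi⟩, ?_, ?_, ?_⟩
    · -- sortedness
      rw [hphi, List.pairwise_cons]
      constructor
      · intro x hx
        rcases List.mem_append.1 hx with hx | hx
        · obtain ⟨z, hz, rfl⟩ := List.mem_map.1 hx
          have := hyH z hz; omega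
        · rw [List.eq_of_mem_replicate hx]; omega
      · rw [List.pairwise_append]
        refine ⟨?_, sorted_replicate _ 1, ?_⟩
        · rw [List.pairwise_map]
          exact hPl.1.imp (fun h => by omega)
        · intro x hx y hy
          obtain ⟨z, hz, rfl⟩ := List.mem_map.1 hx
          rw [List.eq_of_mem_replicate hy]
          omega
    · -- sum
      rw [hphi, osum_cons_cons, ← hsuml]
      simp only [List.sum_cons, List.sum_append, sum_map_succ, List.sum_replicate,
        smul_eq_mul, mul_one]
      omega
    · -- length invariant
      rw [hphi]
      simp only [List.length_cons, List.headI_cons, List.length_append, List.length_map,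
        List.length_replicate]
      rw [if_pos (by simp)]
      omega
    · -- psi ∘ phi = id
      rw [hphi]
      have hM2 : ∀ x ∈ List.map (· + 1) (phi l), (fun x => decide (2 ≤ x)) x = true := by
        intro x hx
        obtain ⟨z, hz, rfl⟩ := List.mem_map.1 hx
        have := hPl.2 z hz
        simp; omega
      have hT : ((List.map (· + 1) (phi l) ++ List.replicate (b - l.headI - 1) 1).takeWhile
          (fun x => 2 ≤ x)) = List.map (· + 1) (phi l) := by
        rw [List.takeWhile_append_of_pos hM2, List.takeWhile_replicate]
        simp
      have hTmap : (List.map (· + 1) (phi l)).map (· - 1) = phi l := by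
        rw [List.map_map]
        exact (List.map_congr_left (fun x _ => by simp)).trans (List.map_id _)
      have hbeq : ((List.map (· + 1) (phi l) ++ List.replicate (b - l.headI - 1) 1).length -
          (List.map (· + 1) (phi l)).length) + 1 + l.headI = b := by
        simp only [List.length_append, List.length_map, List.length_replicate]
        omega
      have hHeq : (if 2 ≤ l.length then (List.map (· + 1) (phi l)).headI - 1 else 1) = H := by
        rw [hHdef]
        by_cases h2 : 2 ≤ l.length
        · rw [if_pos h2, if_pos h2]
          obtain ⟨p, ps, hpps⟩ := List.exists_cons_of_ne_nil (phi_ne_nil h2)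
          rw [hpps]; simp
        · rw [if_neg h2, if_neg h2]
      simp only [psi]
      rw [if_neg (by omega), hT, hTmap, hpsil, hbeq, hHeq]
      congr 1
      omega

lemma drop_ones : ∀ m : List ℕ, m.Pairwise (· ≥ ·) → (∀ x ∈ m, 0 < x) →
    m.dropWhile (fun x => 2 ≤ x) = List.replicate (m.dropWhile (fun x => 2 ≤ x)).length 1 := by
  intro m
  induction m with
  | nil => simp
  | cons x t ih =>
    intro hs hp
    rw [List.pairwise_cons] at hs
    rw [List.dropWhile_cons]
    split
    · exact ih hs.2 (fun y hy => hp y (by simp [hy]))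
    · next hx =>
      have hx1 : x = 1 := by
        have := hp x (by simp)
        simp at hx
        omega
      have hall : ∀ y ∈ x :: t, y = 1 := by
        intro y hy
        rcases List.mem_cons.1 hy with rfl | hy
        · exact hx1
        · have := hs.1 y hy
          have := hp y (by simp [hy])
          omega
      exact List.eq_replicate_of_mem hall

theorem key2 : ∀ m : List ℕ, IsPartition m → IsDistinctPartition (psi m) ∧ phi (psi m) = m := by
  intro m
  induction m using psi.induct with
  | case1 =>
    intro _
    rw [show psi ([] : List ℕ) = [] from by simp [psi]]
    exact ⟨⟨List.Pairwise.nil, by simp⟩, rfl⟩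
  | case2 c m hc =>
    intro hP
    have hc1 : c = 1 := le_antisymm hc (hP.2 c (by simp))
    have hall : ∀ y ∈ m, y = 1 := by
      intro y hy
      have h1 := (List.pairwise_cons.1 hP.1).1 y hy
      have h2 := hP.2 y (by simp [hy])
      omega
    have hm : m = List.replicate m.length 1 := List.eq_replicate_of_mem hall
    have hpsi : psi (c :: m) = [m.length + 1] := by simp [psi, hc]
    rw [hpsi]
    refine ⟨⟨List.pairwise_singleton _ _, by simp⟩, ?_⟩
    have : phi [m.length + 1] = List.replicate (m.length + 1) 1 := rfl
    rw [this, List.replicate_succ, hc1, ← hm]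
  | case3 c m hc ih =>
    intro hP
    have hc2 : 2 ≤ c := by have := hP.2 c (by simp); omega
    have hsm : m.Pairwise (· ≥ ·) := (List.pairwise_cons.1 hP.1).2
    have hmc : ∀ x ∈ m, x ≤ c := (List.pairwise_cons.1 hP.1).1
    have hmpos : ∀ x ∈ m, 0 < x := fun x hx => hP.2 x (by simp [hx])
    have hdrop := drop_ones m hsm hmpos
    simp only [psi]
    rw [if_neg hc]
    set T := m.takeWhile (fun x => 2 ≤ x) with hTdef
    set l := psi (T.map (· - 1)) with hldef
    set e := m.length - T.length with hedef
    set b := e + 1 + l.headI with hbdef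
    set H' := (if 2 ≤ l.length then T.headI - 1 else 1) with hH'def
    have hT2 : ∀ x ∈ T, 2 ≤ x := by
      intro x hx
      have := List.mem_takeWhile_imp hx
      simpa using this
    have hTsorted : T.Pairwise (· ≥ ·) := hsm.sublist (m.takeWhile_sublist _)
    have hT' : IsPartition (T.map (· - 1)) := by
      constructor
      · rw [List.pairwise_map]
        exact hTsorted.imp (fun h => by omega)
      · intro x hx
        obtain ⟨z, hz, rfl⟩ := List.mem_map.1 hx
        have := hT2 z hz
        omega
    obtain ⟨hDl, hphil⟩ := ih hT'
    have hmapT : (T.map (· - 1)).map (· + 1) = T := by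
      rw [List.map_map]
      refine (List.map_congr_left (fun x hx => ?_)).trans (List.map_id _)
      have := hT2 x hx
      simp
      omega
    have hmTd : m = T ++ List.replicate e 1 := by
      have h1 := m.takeWhile_append_dropWhile (p := fun x => 2 ≤ x)
      have h2 : (m.dropWhile (fun x => 2 ≤ x)).length = e := by
        have := congrArg List.length h1
        simp only [List.length_append] at this
        rw [hedef, hTdef]
        omega
      rw [← h1, ← hTdef, hdrop, h2]
    have hTne : l ≠ [] → T ≠ [] := by
      intro h hTn
      rw [hldef, hTn] at h
      simp [psi] at h
    have hH'bound : 1 ≤ H' ∧ H' < c := by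
      rw [hH'def]
      split
      · next h2 =>
        have hTn : T ≠ [] := hTne (by intro h; rw [h] at h2; simp at h2)
        obtain ⟨t0, T'', hTeq⟩ := List.exists_cons_of_ne_nil hTn
        have ht0 : 2 ≤ t0 := hT2 t0 (by rw [hTeq]; simp)
        have ht0m : t0 ∈ m := (m.takeWhile_subset _) (by rw [← hTdef, hTeq]; simp)
        have ht0c : t0 ≤ c := hmc t0 ht0m
        rw [hTeq]
        simp only [List.headI_cons]
        omega
      · omega
    have hlhead : ∀ x ∈ l, x ≤ l.headI := fun x hx => sorted_gt_head hDl.1 hx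
    constructor
    · -- distinct partition
      constructor
      · rw [List.pairwise_cons]
        refine ⟨?_, ?_⟩
        · intro x hx
          rcases List.mem_cons.1 hx with rfl | hx
          · omega
          · have := hlhead x hx
            omega
        · rw [List.pairwise_cons]
          exact ⟨fun x hx => by have := hlhead x hx; omega, hDl.1⟩
      · intro x hx
        rcases List.mem_cons.1 hx with rfl | hx
        · omega
        rcases List.mem_cons.1 hx with rfl | hx
        · omega
        · exact hDl.2 x hx
    · -- phi ∘ psi = id
      have hphieq : phi ((c + b - H') :: b :: l) =
          (c + b - H' - b + (if 2 ≤ l.length then (phi l).headI else 1))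
            :: (List.map (· + 1) (phi l) ++ List.replicate (b - l.headI - 1) 1) := rfl
      rw [hphieq]
      have hHH : (if 2 ≤ l.length then (phi l).headI else 1) = H' := by
        rw [hH'def]
        by_cases h2 : 2 ≤ l.length
        · rw [if_pos h2, if_pos h2, hphil]
          have hTn : T ≠ [] := hTne (by intro h; rw [h] at h2; simp at h2)
          obtain ⟨t0, T'', hTeq⟩ := List.exists_cons_of_ne_nil hTn
          rw [hTeq]
          simp
        · rw [if_neg h2, if_neg h2]
      rw [hHH, hphil, hmapT]
      have h1 : c + b - H' - b + H' = c := by omega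
      have h2 : b - l.headI - 1 = e := by omega
      rw [h1, h2, ← hmTd]


/-- **Schmidt's problem.** The number of partitions into distinct parts with odd-indexed
parts summing to `n` equals the number of ordinary partitions of `n`. -/
theorem schmidt_problem (n : ℕ) :
    Nat.card {l : List ℕ // IsDistinctPartition l ∧ Osum l = n} =
      Nat.card {l : List ℕ // IsPartition l ∧ l.sum = n} := by
  apply Nat.card_congr
  refine
    { toFun := fun x => ⟨phi x.1, (key1 x.1 x.2.1).1, by
        rw [(key1 x.1 x.2.1).2.1]; exact x.2.2⟩
      invFun := fun y => ⟨psi y.1, (key2 y.1 y.2.1).1, ?_⟩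
      left_inv := fun x => Subtype.ext (key1 x.1 x.2.1).2.2.2
      right_inv := fun y => Subtype.ext (key2 y.1 y.2.1).2 }
  have h1 := (key1 (psi y.1) (key2 y.1 y.2.1).1).2.1
  rw [(key2 y.1 y.2.1).2] at h1
  rw [← h1]
  exact y.2.2
end

section
/- For every nonnegative integer n, the number of (ordinary) partitions π = (λ1, λ2, …) with O(π) = n equals the number of 2-color partitions of n, i.e., the number of ordered pairs (ρ, σ) of partitions with |ρ| + |σ| = n. (Note that the set of partitions with O(π) = n is finite: all parts are ≤ n and the number of parts is at most 2n + 1.) -/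
namespace UAP


def col (M : Multiset ℕ) (j : ℕ) : ℕ := Multiset.countP (fun x => j ≤ x) M

lemma col_anti (M : Multiset ℕ) {j j' : ℕ} (h : j ≤ j') : col M j' ≤ col M j := by
  unfold col
  induction M using Multiset.induction_on with
  | empty => simp
  | cons a s ih =>
    rw [Multiset.countP_cons, Multiset.countP_cons]
    have : (if j' ≤ a then 1 else 0) ≤ (if j ≤ a then 1 else 0) := by
      split <;> split <;> omega
    omega

lemma col_rec (M : Multiset ℕ) (v : ℕ) : col M v = M.count v + col M (v + 1) := by
  unfold col
  induction M using Multiset.induction_on with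
  | empty => simp
  | cons a s ih =>
    rw [Multiset.countP_cons, Multiset.countP_cons, Multiset.count_cons]
    split <;> split <;> split <;> omega

lemma col_le_card (M : Multiset ℕ) (j : ℕ) : col M j ≤ Multiset.card M :=
  Multiset.countP_le_card _ _

lemma col_pos_iff (M : Multiset ℕ) (j : ℕ) : 0 < col M j ↔ ∃ x ∈ M, j ≤ x :=
  Multiset.countP_pos

lemma col_inj {M N : Multiset ℕ} (hM : ∀ x ∈ M, 0 < x) (hN : ∀ x ∈ N, 0 < x)
    (h : ∀ j, 1 ≤ j → col M j = col N j) : M = N := by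
  ext v
  match v with
  | 0 =>
    rw [Multiset.count_eq_zero_of_notMem, Multiset.count_eq_zero_of_notMem]
    · intro hv; exact absurd (hN 0 hv) (by omega)
    · intro hv; exact absurd (hM 0 hv) (by omega)
  | v + 1 =>
    have h1 := col_rec M (v + 1)
    have h2 := col_rec N (v + 1)
    have e1 := h (v + 1) (by omega)
    have e2 := h (v + 1 + 1) (by omega)
    omega

/-- The conjugate partition, as a multiset of column heights. -/
def conj (M : Multiset ℕ) : Multiset ℕ :=
  ((Multiset.range (M.sum + 1)).map (fun j => col M (j + 1))).filter (fun v => 0 < v)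

lemma conj_pos (M : Multiset ℕ) : ∀ x ∈ conj M, 0 < x := by
  intro x hx
  exact (Multiset.mem_filter.mp hx).2

lemma col_conj_eq (M : Multiset ℕ) {i : ℕ} (hi : 1 ≤ i) :
    col (conj M) i =
      ((Finset.range (M.sum + 1)).filter (fun j => i ≤ col M (j + 1))).card := by
  unfold conj col
  rw [Multiset.countP_filter]
  rw [Multiset.countP_congr rfl (fun x _ => by
    show (i ≤ x ∧ 0 < x) = (i ≤ x); simp only [eq_iff_iff]; omega)]
  rw [Multiset.countP_map]
  rw [Finset.card, Finset.filter_val]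
  rfl

/-- The Galois duality between a partition and its conjugate. -/
lemma le_col_conj_iff (M : Multiset ℕ) {i j : ℕ} (hi : 1 ≤ i) (hj : 1 ≤ j) :
    j ≤ col (conj M) i ↔ i ≤ col M j := by
  rw [col_conj_eq M hi]
  constructor
  · intro hle
    by_contra hcon
    push_neg at hcon
    have hsub : (Finset.range (M.sum + 1)).filter (fun j' => i ≤ col M (j' + 1)) ⊆
        Finset.range (j - 1) := by
      intro j' hj'
      simp only [Finset.mem_filter, Finset.mem_range] at hj' ⊢
      by_contra hge
      push_neg at hge
      have : col M (j' + 1) ≤ col M j := col_anti M (by omega)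
      omega
    have := Finset.card_le_card hsub
    rw [Finset.card_range] at this
    omega
  · intro hle
    have hsub : Finset.range j ⊆
        (Finset.range (M.sum + 1)).filter (fun j' => i ≤ col M (j' + 1)) := by
      intro j' hj'
      simp only [Finset.mem_range] at hj'
      have hx : ∃ x ∈ M, j ≤ x := (col_pos_iff M j).mp (by omega)
      obtain ⟨x, hxM, hxj⟩ := hx
      have hxs : x ≤ M.sum := Multiset.le_sum_of_mem hxM
      simp only [Finset.mem_filter, Finset.mem_range]
      constructor
      · omega
      · exact le_trans hle (col_anti M (by omega))
    have := Finset.card_le_card hsub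
    rwa [Finset.card_range] at this

lemma nat_eq_of_le_iff {a b : ℕ} (h : ∀ k, 1 ≤ k → (k ≤ a ↔ k ≤ b)) : a = b := by
  rcases Nat.eq_zero_or_pos a with ha | ha <;> rcases Nat.eq_zero_or_pos b with hb | hb
  · omega
  · have := (h b hb).mpr le_rfl; omega
  · have := (h a ha).mp le_rfl; omega
  · have := (h a ha).mp le_rfl; have := (h b hb).mpr le_rfl; omega

lemma col_conj_conj (M : Multiset ℕ) {j : ℕ} (hj : 1 ≤ j) :
    col (conj (conj M)) j = col M j := by
  apply nat_eq_of_le_iff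
  intro k hk
  rw [le_col_conj_iff (conj M) hj hk, le_col_conj_iff M hk hj]

lemma conj_conj {M : Multiset ℕ} (hM : ∀ x ∈ M, 0 < x) : conj (conj M) = M :=
  col_inj (conj_pos _) hM (fun _ hj => col_conj_conj M hj)





/-- For a sorted (weakly decreasing) list, `k ≤ λ_{i+1}` iff at least `i+1` entries are `≥ k`. -/
lemma getD_le_iff {l : List ℕ} (hs : l.Pairwise (· ≥ ·)) {k : ℕ} (hk : 1 ≤ k) (i : ℕ) :
    k ≤ l.getD i 0 ↔ i + 1 ≤ l.countP (fun x => decide (k ≤ x)) := by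
  induction l generalizing i with
  | nil => simp; omega
  | cons a t ih =>
    have hts : t.Pairwise (· ≥ ·) := hs.of_cons
    have hta : ∀ x ∈ t, x ≤ a := fun x hx => List.rel_of_pairwise_cons hs hx
    rw [List.countP_cons]
    simp only [decide_eq_true_eq]
    by_cases hka : k ≤ a
    · rw [if_pos hka]
      cases i with
      | zero => simp only [List.getD_cons_zero]; omega
      | succ i =>
        simp only [List.getD_cons_succ]
        rw [ih hts i]
        omega
    · have ht0 : t.countP (fun x => decide (k ≤ x)) = 0 := by
        rw [List.countP_eq_zero]
        intro x hx
        simpa using by have := hta x hx; omega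
      rw [if_neg hka, ht0]
      cases i with
      | zero => simp only [List.getD_cons_zero]; omega
      | succ i =>
        simp only [List.getD_cons_succ]
        constructor
        · intro hget
          exfalso
          rcases Nat.lt_or_ge i t.length with hlen | hlen
          · rw [List.getD_eq_getElem _ _ hlen] at hget
            have := hta _ (t.getElem_mem hlen)
            omega
          · rw [List.getD_eq_default _ _ hlen] at hget
            omega
        · omega

/-- `Osum` as a sum over even 0-based positions via `getD`. -/
lemma Osum_eq_sum_getD : ∀ (B : ℕ) (l : List ℕ), l.length ≤ 2 * B →
    Osum l = ∑ i ∈ Finset.range B, l.getD (2 * i) 0 := by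
  intro B
  induction B with
  | zero =>
    intro l hl
    have : l = [] := by
      cases l with
      | nil => rfl
      | cons a t => simp at hl
    subst this
    simp [Osum, sumAlt]
  | succ B ih =>
    intro l hl
    rw [Finset.sum_range_succ']
    cases l with
    | nil => simp [Osum, sumAlt]
    | cons a t =>
      cases t with
      | nil =>
        simp only [Osum, sumAlt, id]
        have : ∀ i, [a].getD (2 * (i + 1)) 0 = 0 := by
          intro i
          rw [List.getD_eq_default]
          simp; omega
        simp only [this, Finset.sum_const_zero, List.getD_cons_zero, Nat.mul_zero]
        omega
      | cons b u =>
        have hOsum : Osum (a :: b :: u) = a + Osum u := rfl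
        rw [hOsum, ih u (by simp at hl ⊢; omega)]
        have : ∀ i, (a :: b :: u).getD (2 * (i + 1)) 0 = u.getD (2 * i) 0 := by
          intro i
          rw [show 2 * (i + 1) = (2 * i + 1) + 1 from by omega]
          rw [List.getD_cons_succ, List.getD_cons_succ]
        simp only [this, List.getD_cons_zero, Nat.mul_zero]
        omega



/-- The ceiling-half sum of a multiset equals the sum of its odd column counts. -/
lemma ceil_sum_eq (N : Multiset ℕ) (B : ℕ) (hB : ∀ x ∈ N, x < 2 * B) :
    (N.map (fun x => (x + 1) / 2)).sum = ∑ i ∈ Finset.range B, col N (2 * i + 1) := by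
  induction N using Multiset.induction_on with
  | empty => simp [col]
  | cons a s ih =>
    have ha : a < 2 * B := hB a (Multiset.mem_cons_self a s)
    have hs : ∀ x ∈ s, x < 2 * B := fun x hx => hB x (Multiset.mem_cons_of_mem hx)
    rw [Multiset.map_cons, Multiset.sum_cons, ih hs]
    have hcol : ∀ i, col (a ::ₘ s) (2 * i + 1) =
        col s (2 * i + 1) + if 2 * i + 1 ≤ a then 1 else 0 := by
      intro i
      unfold col
      rw [Multiset.countP_cons]
    simp only [hcol]
    rw [Finset.sum_add_distrib]
    have : ∑ i ∈ Finset.range B, (if 2 * i + 1 ≤ a then 1 else 0) = (a + 1) / 2 := by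
      rw [Finset.sum_boole]
      have : (Finset.range B).filter (fun i => 2 * i + 1 ≤ a) = Finset.range ((a + 1) / 2) := by
        ext i
        simp only [Finset.mem_filter, Finset.mem_range]
        omega
      rw [this]
      simp
    omega

lemma getD_sort_eq (M : Multiset ℕ) (i : ℕ) :
    (M.sort (· ≥ ·)).getD i 0 = col (conj M) (i + 1) := by
  apply nat_eq_of_le_iff
  intro k hk
  rw [le_col_conj_iff M (by omega) hk]
  rw [getD_le_iff (Multiset.pairwise_sort _ _) hk i]
  have : col M k = (M.sort (· ≥ ·)).countP (fun x => decide (k ≤ x)) := by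
    conv_lhs => rw [← Multiset.sort_eq M (· ≥ ·)]
    rw [col, Multiset.coe_countP]
  rw [this]

/-- Key identity: `O(π) = ∑ ⌈μ_j / 2⌉` where `μ` is the conjugate of `π`. -/
lemma Osum_sort_eq (M : Multiset ℕ) :
    Osum (M.sort (· ≥ ·)) = ((conj M).map (fun x => (x + 1) / 2)).sum := by
  set B := Multiset.card M + 1 with hB
  have hlen : (M.sort (· ≥ ·)).length ≤ 2 * B := by
    rw [Multiset.length_sort]; omega
  rw [Osum_eq_sum_getD B _ hlen]
  rw [ceil_sum_eq (conj M) B (by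
    intro x hx
    have hmem := Multiset.mem_filter.mp hx
    obtain ⟨j, _, rfl⟩ := Multiset.mem_map.mp hmem.1
    have := col_le_card M (j + 1)
    omega)]
  apply Finset.sum_congr rfl
  intro i _
  rw [getD_sort_eq M (2 * i)]



def toPair (N : Multiset ℕ) : Multiset ℕ × Multiset ℕ :=
  ((N.filter (fun x => Even x)).map (fun x => x / 2),
   (N.filter (fun x => ¬ Even x)).map (fun x => (x + 1) / 2))

def ofPair (p : Multiset ℕ × Multiset ℕ) : Multiset ℕ :=
  p.1.map (fun a => 2 * a) + p.2.map (fun b => 2 * b - 1)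

lemma even_iff_two (x : ℕ) : Even x ↔ x % 2 = 0 := Nat.even_iff

lemma toPair_ofPair {A B : Multiset ℕ} (hA : ∀ x ∈ A, 0 < x) (hB : ∀ x ∈ B, 0 < x) :
    toPair (ofPair (A, B)) = (A, B) := by
  unfold toPair ofPair
  simp only [Multiset.filter_add, Multiset.filter_map, Multiset.map_add, Function.comp_def]
  have h1 : A.filter (fun a => Even (2 * a)) = A :=
    Multiset.filter_eq_self.mpr (fun a _ => even_two_mul a)
  have h2 : B.filter (fun b => Even (2 * b - 1)) = 0 := by
    rw [Multiset.filter_eq_nil]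
    intro b hb
    have := hB b hb
    rw [even_iff_two]
    omega
  have h3 : A.filter (fun a => ¬ Even (2 * a)) = 0 := by
    rw [Multiset.filter_eq_nil]
    intro a _
    simp [even_two_mul]
  have h4 : B.filter (fun b => ¬ Even (2 * b - 1)) = B := by
    rw [Multiset.filter_eq_self]
    intro b hb
    have := hB b hb
    rw [even_iff_two]
    omega
  rw [h1, h2, h3, h4]
  simp only [Multiset.map_zero, Multiset.map_map, Function.comp_def]
  rw [Prod.mk.injEq]
  constructor
  · rw [add_zero, show (fun x => 2 * x / 2) = (fun a : ℕ => a) from funext fun a => by omega]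
    exact Multiset.map_id' A
  · rw [zero_add, Multiset.map_congr rfl (fun b hb => by have := hB b hb; omega :
      ∀ b ∈ B, (2 * b - 1 + 1) / 2 = b)]
    exact Multiset.map_id' B

lemma ofPair_toPair (N : Multiset ℕ) : ofPair (toPair N) = N := by
  unfold toPair ofPair
  simp only [Multiset.map_map, Function.comp_def]
  rw [Multiset.map_congr rfl (fun x hx => by
    have hxe := (Multiset.mem_filter.mp hx).2
    rw [even_iff_two] at hxe
    omega : ∀ x ∈ N.filter (fun x => Even x), 2 * (x / 2) = x)]
  rw [Multiset.map_congr rfl (fun x hx => by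
    have hxe := (Multiset.mem_filter.mp hx).2
    rw [even_iff_two] at hxe
    omega : ∀ x ∈ N.filter (fun x => ¬ Even x), 2 * ((x + 1) / 2) - 1 = x)]
  rw [Multiset.map_id', Multiset.map_id', Multiset.filter_add_not]

lemma toPair_pos {N : Multiset ℕ} (hN : ∀ x ∈ N, 0 < x) :
    (∀ x ∈ (toPair N).1, 0 < x) ∧ (∀ x ∈ (toPair N).2, 0 < x) := by
  unfold toPair
  constructor <;> intro x hx <;>
    obtain ⟨y, hy, rfl⟩ := Multiset.mem_map.mp hx <;>
    have hym := Multiset.mem_filter.mp hy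
  · have := hN y hym.1
    have := hym.2
    rw [even_iff_two] at this
    omega
  · have := hN y hym.1
    omega

lemma ofPair_pos {A B : Multiset ℕ} (hA : ∀ x ∈ A, 0 < x) (hB : ∀ x ∈ B, 0 < x) :
    ∀ x ∈ ofPair (A, B), 0 < x := by
  unfold ofPair
  intro x hx
  rcases Multiset.mem_add.mp hx with h | h <;> obtain ⟨y, hy, rfl⟩ := Multiset.mem_map.mp h
  · have := hA y hy; omega
  · have := hB y hy; omega

lemma toPair_sum (N : Multiset ℕ) :
    (N.map (fun x => (x + 1) / 2)).sum = (toPair N).1.sum + (toPair N).2.sum := by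
  unfold toPair
  conv_lhs => rw [← Multiset.filter_add_not (fun x => Even x) N]
  rw [Multiset.map_add, Multiset.sum_add]
  congr 1
  · apply congrArg
    rw [Multiset.map_congr rfl]
    intro x hx
    have := (Multiset.mem_filter.mp hx).2
    rw [even_iff_two] at this
    omega





lemma sort_coe {l : List ℕ} (hl : l.Pairwise (· ≥ ·)) :
    Multiset.sort (↑l : Multiset ℕ) (· ≥ ·) = l := by
  apply List.Perm.eq_of_pairwise' (Multiset.pairwise_sort _ _) hl
  exact Multiset.coe_eq_coe.mp (Multiset.sort_eq _ _)

/-- lists with a condition ↔ multisets with the transported condition -/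
def listMultisetEquiv (P : Multiset ℕ → Prop) :
    {l : List ℕ // l.Pairwise (· ≥ ·) ∧ P ↑l} ≃ {M : Multiset ℕ // P M} where
  toFun := fun ⟨l, hl⟩ => ⟨↑l, hl.2⟩
  invFun := fun ⟨M, hM⟩ => ⟨M.sort (· ≥ ·), Multiset.pairwise_sort _ _, by
    rwa [Multiset.sort_eq]⟩
  left_inv := fun ⟨l, hl⟩ => Subtype.ext (sort_coe hl.1)
  right_inv := fun ⟨M, hM⟩ => Subtype.ext (Multiset.sort_eq _ _)

def conjEquiv (n : ℕ) :
    {M : Multiset ℕ // (∀ x ∈ M, 0 < x) ∧ Osum (M.sort (· ≥ ·)) = n} ≃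
    {N : Multiset ℕ // (∀ x ∈ N, 0 < x) ∧ (N.map (fun x => (x + 1) / 2)).sum = n} where
  toFun := fun ⟨M, hM⟩ => ⟨conj M, conj_pos M, by rw [← Osum_sort_eq]; exact hM.2⟩
  invFun := fun ⟨N, hN⟩ => ⟨conj N, conj_pos N, by
    rw [Osum_sort_eq, conj_conj hN.1]; exact hN.2⟩
  left_inv := fun ⟨M, hM⟩ => Subtype.ext (conj_conj hM.1)
  right_inv := fun ⟨N, hN⟩ => Subtype.ext (conj_conj hN.1)

def splitEquiv (n : ℕ) :
    {N : Multiset ℕ // (∀ x ∈ N, 0 < x) ∧ (N.map (fun x => (x + 1) / 2)).sum = n} ≃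
    {p : Multiset ℕ × Multiset ℕ //
      (∀ x ∈ p.1, 0 < x) ∧ (∀ x ∈ p.2, 0 < x) ∧ p.1.sum + p.2.sum = n} where
  toFun := fun ⟨N, hN⟩ => ⟨toPair N, (toPair_pos hN.1).1, (toPair_pos hN.1).2, by
    rw [← toPair_sum]; exact hN.2⟩
  invFun := fun ⟨p, hp⟩ => ⟨ofPair p, ofPair_pos hp.1 hp.2.1, by
    have : toPair (ofPair p) = p := by
      rw [show p = (p.1, p.2) from rfl] at *
      exact toPair_ofPair hp.1 hp.2.1
    rw [toPair_sum, this]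
    exact hp.2.2⟩
  left_inv := fun ⟨N, hN⟩ => Subtype.ext (ofPair_toPair N)
  right_inv := fun ⟨p, hp⟩ => Subtype.ext (by
    rw [show p = (p.1, p.2) from rfl] at *
    exact toPair_ofPair hp.1 hp.2.1)



end UAP

/-- **Uncu–Andrews–Paule theorem.** The number of partitions `π` with `O(π) = n` equals
the number of 2-color partitions of `n`, i.e. ordered pairs `(ρ, σ)` of partitions with
`|ρ| + |σ| = n`. -/
theorem uncu_andrews_paule (n : ℕ) :
    Nat.card {l : List ℕ // IsPartition l ∧ Osum l = n} =
      Nat.card {p : List ℕ × List ℕ //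
        IsPartition p.1 ∧ IsPartition p.2 ∧ p.1.sum + p.2.sum = n} := by
  apply Nat.card_congr
  -- step 1: reorganize LHS subtype
  have e1 : {l : List ℕ // IsPartition l ∧ Osum l = n} ≃
      {l : List ℕ // l.Pairwise (· ≥ ·) ∧ ((∀ x ∈ (↑l : Multiset ℕ), 0 < x) ∧
        Osum ((↑l : Multiset ℕ).sort (· ≥ ·)) = n)} :=
    Equiv.subtypeEquiv (Equiv.refl _) (fun l => by
      simp only [Equiv.refl_apply, IsPartition, Multiset.mem_coe]
      constructor
      · rintro ⟨⟨hs, hp⟩, ho⟩; exact ⟨hs, hp, by rwa [UAP.sort_coe hs]⟩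
      · rintro ⟨hs, hp, ho⟩; exact ⟨⟨hs, hp⟩, by rwa [UAP.sort_coe hs] at ho⟩)
  have e5 : {p : List ℕ × List ℕ //
        IsPartition p.1 ∧ IsPartition p.2 ∧ p.1.sum + p.2.sum = n} ≃
      {p : Multiset ℕ × Multiset ℕ //
        (∀ x ∈ p.1, 0 < x) ∧ (∀ x ∈ p.2, 0 < x) ∧ p.1.sum + p.2.sum = n} := by
    refine ⟨fun ⟨p, hp⟩ => ⟨(↑p.1, ↑p.2), hp.1.2, hp.2.1.2, by
        simpa using hp.2.2⟩,
      fun ⟨q, hq⟩ => ⟨(q.1.sort (· ≥ ·), q.2.sort (· ≥ ·)),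
        ⟨Multiset.pairwise_sort _ _, fun x hx => hq.1 x (by
          rwa [← Multiset.sort_eq q.1 (· ≥ ·), Multiset.mem_coe])⟩,
        ⟨Multiset.pairwise_sort _ _, fun x hx => hq.2.1 x (by
          rwa [← Multiset.sort_eq q.2 (· ≥ ·), Multiset.mem_coe])⟩, by
        have h1 : (q.1.sort (· ≥ ·)).sum = q.1.sum := by
          rw [← Multiset.sum_coe, Multiset.sort_eq]
        have h2 : (q.2.sort (· ≥ ·)).sum = q.2.sum := by
          rw [← Multiset.sum_coe, Multiset.sort_eq]
        rw [h1, h2]; exact hq.2.2⟩,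
      fun ⟨p, hp⟩ => Subtype.ext (by
        simp only []
        rw [Prod.ext_iff]
        exact ⟨UAP.sort_coe hp.1.1, UAP.sort_coe hp.2.1.1⟩),
      fun ⟨q, hq⟩ => Subtype.ext (by
        rw [Prod.ext_iff]
        exact ⟨Multiset.sort_eq _ _, Multiset.sort_eq _ _⟩)⟩
  exact e1.trans ((UAP.listMultisetEquiv _).trans
    ((UAP.conjEquiv n).trans ((UAP.splitEquiv n).trans e5.symm)))
end

section
/- (Ishikawa–Zeng) Let N be a nonnegative integer and ν ∈ {0,1}. In the polynomial ring ℤ[a,b,c,d], writing Q = abcd, one has ∑_{π ∈ D_{≤ 2N+ν}} a^{⌈O⌉(π)} b^{⌊O⌋(π)} c^{⌈E⌉(π)} d^{⌊E⌋(π)} = ∑_{i=0}^{N} [N choose i]_Q · (−a; Q)_{N−i+ν} · (−c; Q)_i · (ab)^i, where the sum on the left runs over the (finitely many) partitions into distinct parts all ≤ 2N+ν. -/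
section QBLemmas
open Polynomial


@[simp] lemma qbinom_zero_right (n : ℕ) : qbinom n 0 = 1 := by
  cases n <;> rfl

lemma qbinom_succ_succ (n k : ℕ) :
    qbinom (n + 1) (k + 1) = qbinom n k + X ^ (k + 1) * qbinom n (k + 1) := rfl

lemma qbinom_eq_zero : ∀ {n k : ℕ}, n < k → qbinom n k = 0 := by
  intro n
  induction n with
  | zero =>
    intro k hk
    cases k with
    | zero => omega
    | succ k => rfl
  | succ n ih =>
    intro k hk
    cases k with
    | zero => omega
    | succ k => rw [qbinom_succ_succ, ih (by omega), ih (by omega)]; ring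

lemma qbinom_self : ∀ n : ℕ, qbinom n n = 1 := by
  intro n
  induction n with
  | zero => rfl
  | succ n ih => rw [qbinom_succ_succ, ih, qbinom_eq_zero (by omega)]; ring

lemma qbinom_one (n : ℕ) : qbinom n 1 = ∑ j ∈ Finset.range n, X ^ j := by
  induction n with
  | zero => simp [qbinom_eq_zero]
  | succ n ih =>
    rw [show (1:ℕ) = 0 + 1 from rfl, qbinom_succ_succ, qbinom_zero_right, ih,
      Finset.mul_sum]
    have e : ∑ i ∈ Finset.range n, X ^ (0+1) * X ^ i
        = ∑ i ∈ Finset.range n, (X:Polynomial ℤ) ^ (i+1) :=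
      Finset.sum_congr rfl (fun j _ => by rw [← pow_add]; ring_nf)
    rw [e, Finset.sum_range_succ' (fun i => (X:Polynomial ℤ) ^ i) n, pow_zero]
    exact add_comm 1 _

lemma qbinom_dual_pascal : ∀ n k : ℕ, k ≤ n →
    qbinom (n + 1) (k + 1) = qbinom n (k + 1) + X ^ (n - k) * qbinom n k := by
  intro n
  induction n with
  | zero =>
    intro k hk
    interval_cases k
    simp [qbinom_self, qbinom_eq_zero]
  | succ n ih =>
    intro k hk
    cases k with
    | zero =>
      rw [qbinom_succ_succ, qbinom_zero_right, qbinom_one]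
      simp only [zero_add, pow_one, Nat.sub_zero, mul_one, Finset.mul_sum]
      have e : ∑ i ∈ Finset.range (n+1), X * X ^ i
          = ∑ i ∈ Finset.range (n+1), (X:Polynomial ℤ) ^ (i+1) :=
        Finset.sum_congr rfl (fun j _ => by rw [pow_succ, mul_comm])
      have h2 : ∑ i ∈ Finset.range (n+2), (X:Polynomial ℤ) ^ i
          = ∑ i ∈ Finset.range (n+1), X ^ (i+1) + 1 := by
        rw [Finset.sum_range_succ']; norm_num
      have h1 : ∑ i ∈ Finset.range (n+2), (X:Polynomial ℤ) ^ i
          = ∑ i ∈ Finset.range (n+1), X ^ i + X ^ (n+1) := Finset.sum_range_succ _ _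
      rw [e, add_comm, ← h2, h1]
    | succ k =>
      rcases eq_or_lt_of_le hk with h | h
      · have h' : k = n := by omega
        subst h'
        rw [qbinom_self, qbinom_eq_zero (show k + 1 < k + 1 + 1 by omega), qbinom_self]
        simp
      · have hk' : k ≤ n := by omega
        have hk'' : k + 1 ≤ n := by omega
        have L : qbinom (n + 1 + 1) (k + 1 + 1)
            = (qbinom n (k+1) + X ^ (n-k) * qbinom n k)
              + X ^ (k+1+1) * (qbinom n (k+1+1) + X ^ (n-(k+1)) * qbinom n (k+1)) := by
          rw [qbinom_succ_succ, ih k hk', ih (k+1) hk'']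
        have R : qbinom (n + 1) (k + 1 + 1) + X ^ (n + 1 - (k + 1)) * qbinom (n + 1) (k + 1)
            = (qbinom n (k+1) + X ^ (k+1+1) * qbinom n (k+1+1))
              + X ^ (n+1-(k+1)) * (qbinom n k + X ^ (k+1) * qbinom n (k+1)) := by
          rw [qbinom_succ_succ, qbinom_succ_succ]
        rw [L, R]
        obtain ⟨m, hm⟩ : ∃ m, n = k + 1 + m := ⟨n - (k+1), by omega⟩
        subst hm
        rw [show k + 1 + m - k = m + 1 by omega, show k + 1 + m - (k+1) = m by omega,
          show k + 1 + m + 1 - (k + 1) = m + 1 by omega]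
        ring

lemma qbinom_symm : ∀ n k : ℕ, k ≤ n → qbinom n (n - k) = qbinom n k := by
  intro n
  induction n with
  | zero => intro k hk; interval_cases k; rfl
  | succ n ih =>
    intro k hk
    cases k with
    | zero => rw [Nat.sub_zero, qbinom_self, qbinom_zero_right]
    | succ k =>
      rcases eq_or_lt_of_le hk with h | h
      · have h' : k = n := by omega
        subst h'
        simp [qbinom_self]
      · have hk' : k ≤ n := by omega
        have hk'' : k + 1 ≤ n := by omega
        rw [show n + 1 - (k+1) = (n - (k+1)) + 1 by omega, qbinom_succ_succ,
          ih (k+1) hk'', show n - (k+1) + 1 = n - k by omega, ih k hk',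
          qbinom_dual_pascal n k hk']

end QBLemmas

open MvPolynomial

abbrev P4 := MvPolynomial (Fin 4) ℤ

noncomputable def wt (l : List ℕ) : P4 :=
  X 0 ^ ceilO l * X 1 ^ floorO l * X 2 ^ ceilE l * X 3 ^ floorE l

noncomputable def σ4 : P4 →ₐ[ℤ] P4 := rename ![2, 3, 0, 1]

lemma sumAlt_cons (f : ℕ → ℕ) (a : ℕ) (l : List ℕ) :
    sumAlt f (a :: l) = f a + sumAlt f l.tail := by
  cases l <;> simp [sumAlt]

@[simp] lemma σ4_X0 : σ4 (X 0) = X 2 := by simp [σ4]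
@[simp] lemma σ4_X1 : σ4 (X 1) = X 3 := by simp [σ4]
@[simp] lemma σ4_X2 : σ4 (X 2) = X 0 := by simp [σ4]
@[simp] lemma σ4_X3 : σ4 (X 3) = X 1 := by simp [σ4]

lemma wt_nil : wt [] = 1 := by simp [wt, ceilO, floorO, ceilE, floorE, sumAlt]

lemma wt_cons (a : ℕ) (l : List ℕ) :
    wt (a :: l) = X 0 ^ ((a + 1) / 2) * X 1 ^ (a / 2) * σ4 (wt l) := by
  have h1 : ceilO (a :: l) = (a + 1) / 2 + ceilE l := sumAlt_cons _ a l
  have h2 : floorO (a :: l) = a / 2 + floorE l := sumAlt_cons _ a l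
  have h3 : ceilE (a :: l) = ceilO l := rfl
  have h4 : floorE (a :: l) = floorO l := rfl
  rw [wt, h1, h2, h3, h4, wt]
  simp only [map_mul, map_pow, σ4_X0, σ4_X1, σ4_X2, σ4_X3]
  rw [pow_add, pow_add]
  ring

def Spart (M : ℕ) : Set (List ℕ) := {l | IsDistinctPartition l ∧ ∀ x ∈ l, x ≤ M}

lemma Spart_zero : Spart 0 = {[]} := by
  ext l
  constructor
  · rintro ⟨⟨_, hpos⟩, hle⟩
    cases l with
    | nil => rfl
    | cons a t => exact absurd (Nat.lt_of_lt_of_le (hpos a (by simp)) (hle a (by simp))) (by omega)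
  · rintro rfl
    exact ⟨⟨List.Pairwise.nil, by simp⟩, by simp⟩

lemma Spart_succ (M : ℕ) :
    Spart (M + 1) = Spart M ∪ (fun l => (M + 1) :: l) '' Spart M := by
  ext l
  constructor
  · rintro ⟨⟨hsort, hpos⟩, hle⟩
    cases l with
    | nil => exact Or.inl ⟨⟨List.Pairwise.nil, by simp⟩, by simp⟩
    | cons a t =>
      rw [List.pairwise_cons] at hsort
      by_cases ha : a ≤ M
      · refine Or.inl ⟨⟨List.pairwise_cons.2 hsort, hpos⟩, ?_⟩
        intro x hx
        rcases List.mem_cons.1 hx with rfl | hx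
        · exact ha
        · exact le_trans (le_of_lt (hsort.1 x hx)) ha
      · have ha' : a = M + 1 := le_antisymm (hle a (by simp)) (by omega)
        subst ha'
        refine Or.inr ⟨t, ⟨⟨hsort.2, fun x hx => hpos x (by simp [hx])⟩, ?_⟩, rfl⟩
        intro x hx
        have := hsort.1 x hx
        omega
  · rintro (⟨hl, hle⟩ | ⟨t, ⟨⟨hsort, hpos⟩, hle⟩, rfl⟩)
    · exact ⟨hl, fun x hx => le_trans (hle x hx) (by omega)⟩
    · refine ⟨⟨List.pairwise_cons.2 ⟨fun x hx => by have := hle x hx; omega, hsort⟩, ?_⟩, ?_⟩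
      · intro x hx
        rcases List.mem_cons.1 hx with rfl | hx
        · omega
        · exact hpos x hx
      · intro x hx
        rcases List.mem_cons.1 hx with rfl | hx
        · omega
        · have := hle x hx; omega

lemma Spart_finite (M : ℕ) : (Spart M).Finite := by
  induction M with
  | zero => rw [Spart_zero]; exact Set.finite_singleton _
  | succ M ih => rw [Spart_succ]; exact ih.union (ih.image _)

noncomputable def Fgen (M : ℕ) : P4 := ∑ᶠ l ∈ Spart M, wt l

lemma Fgen_finset (M : ℕ) (f : List ℕ → P4) :
    ∑ᶠ l ∈ Spart M, f l = ∑ l ∈ (Spart_finite M).toFinset, f l := by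
  conv_lhs => rw [← (Spart_finite M).coe_toFinset]
  exact finsum_mem_coe_finset f _

lemma Fgen_zero : Fgen 0 = 1 := by
  rw [Fgen, Spart_zero, finsum_mem_singleton, wt_nil]

lemma Fgen_succ (M : ℕ) :
    Fgen (M + 1) = Fgen M + X 0 ^ ((M + 2) / 2) * X 1 ^ ((M + 1) / 2) * σ4 (Fgen M) := by
  have hdisj : Disjoint (Spart M) ((fun l => (M + 1) :: l) '' Spart M) := by
    rw [Set.disjoint_right]
    rintro l ⟨t, ⟨_, hle⟩, rfl⟩ ⟨_, hle'⟩
    have := hle' (M + 1) (by simp)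
    omega
  rw [Fgen, Spart_succ, finsum_mem_union hdisj (Spart_finite M) ((Spart_finite M).image _),
    finsum_mem_image (Set.InjOn.mono (Set.subset_univ _) (fun x _ y _ h => by
      simpa using h))]
  congr 1
  calc ∑ᶠ l ∈ Spart M, wt ((M + 1) :: l)
      = ∑ᶠ l ∈ Spart M, X 0 ^ ((M + 2) / 2) * X 1 ^ ((M + 1) / 2) * σ4 (wt l) := by
        apply finsum_mem_congr rfl
        intro l _
        rw [wt_cons]
    _ = X 0 ^ ((M + 2) / 2) * X 1 ^ ((M + 1) / 2) * σ4 (Fgen M) := by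
        rw [Fgen_finset, Fgen, Fgen_finset, ← Finset.mul_sum, map_sum]

noncomputable def Qp : P4 := X 0 * X 1 * X 2 * X 3

noncomputable def Rp (N ν : ℕ) : P4 :=
  ∑ i ∈ Finset.range (N + 1),
    Polynomial.aeval Qp (qbinom N i)
      * (∏ j ∈ Finset.range (N - i + ν), (1 + X 0 * Qp ^ j))
      * (∏ j ∈ Finset.range i, (1 + X 2 * Qp ^ j))
      * (X 0 * X 1) ^ i

lemma σ4_Qp : σ4 Qp = Qp := by
  simp only [Qp, map_mul, σ4_X0, σ4_X1, σ4_X2, σ4_X3]; ring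

lemma σ4_aeval (p : Polynomial ℤ) :
    σ4 (Polynomial.aeval Qp p) = Polynomial.aeval Qp p := by
  rw [← Polynomial.aeval_algHom_apply, σ4_Qp]

lemma σ4_Rp (N ν : ℕ) : σ4 (Rp N ν) = ∑ i ∈ Finset.range (N + 1),
    Polynomial.aeval Qp (qbinom N i)
      * (∏ j ∈ Finset.range (N - i + ν), (1 + X 2 * Qp ^ j))
      * (∏ j ∈ Finset.range i, (1 + X 0 * Qp ^ j))
      * (X 2 * X 3) ^ i := by
  rw [Rp, map_sum]
  refine Finset.sum_congr rfl fun i _ => ?_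
  simp only [map_mul, map_prod, map_pow, map_add, map_one, σ4_X0, σ4_X1, σ4_X2, σ4_X3,
    σ4_Qp, σ4_aeval]

lemma idI (N : ℕ) :
    Rp N 1 = Rp N 0 + X 0 ^ (N + 1) * X 1 ^ N * σ4 (Rp N 0) := by
  rw [σ4_Rp]
  have refl1 : (∑ i ∈ Finset.range (N + 1),
      Polynomial.aeval Qp (qbinom N i)
        * (∏ j ∈ Finset.range (N - i + 0), (1 + X 2 * Qp ^ j))
        * (∏ j ∈ Finset.range i, (1 + X 0 * Qp ^ j))
        * (X 2 * X 3) ^ i)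
      = ∑ i ∈ Finset.range (N + 1),
      Polynomial.aeval Qp (qbinom N (N - i))
        * (∏ j ∈ Finset.range (N - (N - i) + 0), (1 + X 2 * Qp ^ j))
        * (∏ j ∈ Finset.range (N - i), (1 + X 0 * Qp ^ j))
        * (X 2 * X 3) ^ (N - i) := by
    rw [← Finset.sum_range_reflect]
    exact Finset.sum_congr rfl fun i hi => by rw [show N + 1 - 1 - i = N - i by omega]
  rw [refl1, Finset.mul_sum, Rp, Rp, ← Finset.sum_add_distrib]
  refine Finset.sum_congr rfl fun i hi => ?_
  rw [Finset.mem_range] at hi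
  obtain ⟨k, hk⟩ : ∃ k, N = i + k := ⟨N - i, by omega⟩
  subst hk
  have hsym : qbinom (i + k) (i + k - i) = qbinom (i + k) i := qbinom_symm (i + k) i (by omega)
  rw [show i + k - i = k by omega] at hsym ⊢
  rw [show i + k - k + 0 = i by omega, show k + 0 = k by omega, hsym,
    Finset.prod_range_succ]
  simp only [Qp]
  ring

lemma idII (N : ℕ) :
    Rp (N + 1) 0 = Rp N 1 + (X 0 * X 1) ^ (N + 1) * σ4 (Rp N 1) := by
  have hX : (∑ i ∈ Finset.range (N + 1 + 1),
      Polynomial.aeval Qp (qbinom N i)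
        * (∏ j ∈ Finset.range (N + 1 - i + 0), (1 + X 0 * Qp ^ j))
        * (∏ j ∈ Finset.range i, (1 + X 2 * Qp ^ j))
        * (X 0 * X 1) ^ i) = Rp N 1 := by
    rw [Finset.sum_range_succ, qbinom_eq_zero (show N < N + 1 by omega), map_zero,
      zero_mul, zero_mul, zero_mul, add_zero, Rp]
    refine Finset.sum_congr rfl fun i hi => ?_
    rw [Finset.mem_range] at hi
    rw [show N + 1 - i + 0 = N - i + 1 by omega]
  have hY : (∑ i ∈ Finset.range (N + 1),
      Qp ^ (N - i) * (Polynomial.aeval Qp (qbinom N i)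
        * (∏ j ∈ Finset.range (N - i), (1 + X 0 * Qp ^ j))
        * (∏ j ∈ Finset.range (i + 1), (1 + X 2 * Qp ^ j))
        * (X 0 * X 1) ^ (i + 1)))
      = (X 0 * X 1) ^ (N + 1) * σ4 (Rp N 1) := by
    rw [σ4_Rp, Finset.mul_sum]
    have refl1 : (∑ i ∈ Finset.range (N + 1),
        (X 0 * X 1) ^ (N + 1) * (Polynomial.aeval Qp (qbinom N i)
          * (∏ j ∈ Finset.range (N - i + 1), (1 + X 2 * Qp ^ j))
          * (∏ j ∈ Finset.range i, (1 + X 0 * Qp ^ j))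
          * (X 2 * X 3) ^ i))
        = ∑ i ∈ Finset.range (N + 1),
        (X 0 * X 1) ^ (N + 1) * (Polynomial.aeval Qp (qbinom N (N - i))
          * (∏ j ∈ Finset.range (N - (N - i) + 1), (1 + X 2 * Qp ^ j))
          * (∏ j ∈ Finset.range (N - i), (1 + X 0 * Qp ^ j))
          * (X 2 * X 3) ^ (N - i)) := by
      rw [← Finset.sum_range_reflect]
      exact Finset.sum_congr rfl fun i hi => by rw [show N + 1 - 1 - i = N - i by omega]
    rw [refl1]
    refine Finset.sum_congr rfl fun i hi => ?_
    rw [Finset.mem_range] at hi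
    obtain ⟨k, hk⟩ : ∃ k, N = i + k := ⟨N - i, by omega⟩
    subst hk
    have hsym : qbinom (i + k) (i + k - i) = qbinom (i + k) i := qbinom_symm (i + k) i (by omega)
    rw [show i + k - i = k by omega] at hsym ⊢
    rw [show i + k - k + 1 = i + 1 by omega, hsym]
    simp only [Qp]
    ring
  rw [← hY, ← hX, Rp, Finset.sum_range_succ' _ (N + 1), Finset.sum_range_succ' (fun i =>
      Polynomial.aeval Qp (qbinom N i)
        * (∏ j ∈ Finset.range (N + 1 - i + 0), (1 + X 0 * Qp ^ j))
        * (∏ j ∈ Finset.range i, (1 + X 2 * Qp ^ j))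
        * (X 0 * X 1) ^ i) (N + 1)]
  have hzero : Polynomial.aeval Qp (qbinom (N + 1) 0)
        * (∏ j ∈ Finset.range (N + 1 - 0 + 0), (1 + X 0 * Qp ^ j))
        * (∏ j ∈ Finset.range 0, (1 + X 2 * Qp ^ j))
        * (X 0 * X 1) ^ 0
      = Polynomial.aeval Qp (qbinom N 0)
        * (∏ j ∈ Finset.range (N + 1 - 0 + 0), (1 + X 0 * Qp ^ j))
        * (∏ j ∈ Finset.range 0, (1 + X 2 * Qp ^ j))
        * (X 0 * X 1) ^ 0 := by
    rw [qbinom_zero_right, qbinom_zero_right]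
  rw [hzero, add_right_comm, ← Finset.sum_add_distrib]
  rw [add_left_inj]
  refine Finset.sum_congr rfl fun i hi => ?_
  rw [Finset.mem_range] at hi
  rw [qbinom_dual_pascal N i (by omega), map_add, map_mul, map_pow, Polynomial.aeval_X,
    show N + 1 - (i + 1) + 0 = N - i by omega]
  ring

lemma mainA (N : ℕ) : Fgen (2 * N) = Rp N 0 ∧ Fgen (2 * N + 1) = Rp N 1 := by
  induction N with
  | zero =>
    constructor
    · show Fgen 0 = Rp 0 0
      rw [Fgen_zero, Rp]
      simp
    · show Fgen (0 + 1) = Rp 0 1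
      rw [Fgen_succ 0, Fgen_zero, map_one, Rp]
      simp
  | succ N ih =>
    obtain ⟨ih0, ih1⟩ := ih
    have hA : Fgen (2 * (N + 1)) = Rp (N + 1) 0 := by
      rw [show 2 * (N + 1) = 2 * N + 1 + 1 by ring, Fgen_succ (2 * N + 1), ih1,
        show (2 * N + 1 + 2) / 2 = N + 1 by omega, show (2 * N + 1 + 1) / 2 = N + 1 by omega,
        idII N]
      ring
    refine ⟨hA, ?_⟩
    rw [show 2 * (N + 1) + 1 = 2 * (N + 1) + 1 by rfl, Fgen_succ (2 * (N + 1)), hA,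
      show (2 * (N + 1) + 2) / 2 = N + 2 by omega, show (2 * (N + 1) + 1) / 2 = N + 1 by omega,
      idI (N + 1)]

open MvPolynomial in
/-- **Ishikawa–Zeng.** In `ℤ[a,b,c,d]` (with `a = X 0`, `b = X 1`, `c = X 2`, `d = X 3` and
`Q = abcd`), the generating function of Boulet's 4-variable weight over partitions into
distinct parts `≤ 2N + ν` equals
`∑_{i=0}^{N} [N choose i]_Q (−a;Q)_{N−i+ν} (−c;Q)_i (ab)^i`. -/
theorem ishikawa_zeng_psi (N ν : ℕ) (hν : ν = 0 ∨ ν = 1) :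
    ∑ᶠ l ∈ {l : List ℕ | IsDistinctPartition l ∧ ∀ x ∈ l, x ≤ 2 * N + ν},
      (X 0 : MvPolynomial (Fin 4) ℤ) ^ ceilO l * X 1 ^ floorO l * X 2 ^ ceilE l * X 3 ^ floorE l
    = ∑ i ∈ Finset.range (N + 1),
        Polynomial.aeval (X 0 * X 1 * X 2 * X 3 : MvPolynomial (Fin 4) ℤ) (qbinom N i)
          * (∏ j ∈ Finset.range (N - i + ν), (1 + X 0 * (X 0 * X 1 * X 2 * X 3) ^ j))
          * (∏ j ∈ Finset.range i, (1 + X 2 * (X 0 * X 1 * X 2 * X 3) ^ j))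
          * (X 0 * X 1) ^ i := by
  have hL : ∑ᶠ l ∈ {l : List ℕ | IsDistinctPartition l ∧ ∀ x ∈ l, x ≤ 2 * N + ν},
      (X 0 : MvPolynomial (Fin 4) ℤ) ^ ceilO l * X 1 ^ floorO l * X 2 ^ ceilE l * X 3 ^ floorE l
      = Fgen (2 * N + ν) := rfl
  have hR : (∑ i ∈ Finset.range (N + 1),
        Polynomial.aeval (X 0 * X 1 * X 2 * X 3 : MvPolynomial (Fin 4) ℤ) (qbinom N i)
          * (∏ j ∈ Finset.range (N - i + ν), (1 + X 0 * (X 0 * X 1 * X 2 * X 3) ^ j))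
          * (∏ j ∈ Finset.range i, (1 + X 2 * (X 0 * X 1 * X 2 * X 3) ^ j))
          * (X 0 * X 1) ^ i) = Rp N ν := rfl
  rw [hL, hR]
  rcases hν with rfl | rfl
  · rw [show 2 * N + 0 = 2 * N by ring]
    exact (mainA N).1
  · exact (mainA N).2
end

section
/- For every nonnegative integer N, the following identity holds in the ring ℤ[z]⟦q⟧ of formal power series in q with coefficients in ℤ[z]: (q; q)_N · ∑_{π ∈ P_{≤N}} q^{O(π)} z^{γ(π)} = ∑_{k=0}^{N} q^k z^k [N choose k]_q. (The infinite sum over P_{≤N} is a well-defined formal power series: for each n there are only finitely many π ∈ P_{≤N} with O(π) = n, and γ(π) ≤ N for all of them.) -/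
namespace PartGF


lemma Osum_nil : Osum [] = 0 := rfl
lemma Esum_nil : Esum [] = 0 := rfl
lemma Esum_cons (a : ℕ) (l : List ℕ) : Esum (a :: l) = Osum l := rfl
lemma Osum_cons (a : ℕ) (l : List ℕ) : Osum (a :: l) = a + Esum l := by
  cases l <;> simp [Osum, Esum, sumAlt]

lemma esum_osum (l : List ℕ) (hs : l.Pairwise (· ≥ ·)) :
    Esum l ≤ Osum l ∧ ∀ a, (∀ x ∈ l, x ≤ a) → Osum l ≤ a + Esum l := by
  induction l with
  | nil => simp [Osum_nil, Esum_nil]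
  | cons a t ih =>
    rw [List.pairwise_cons] at hs
    obtain ⟨ih1, ih2⟩ := ih hs.2
    constructor
    · rw [Esum_cons, Osum_cons]
      exact le_trans (ih2 a (fun x hx => hs.1 x hx)) (by omega)
    · intro c hc
      rw [Esum_cons, Osum_cons]
      have := hc a (by simp)
      omega

lemma Esum_le_Osum (l : List ℕ) (hs : l.Pairwise (· ≥ ·)) : Esum l ≤ Osum l :=
  (esum_osum l hs).1

lemma gammaSum_cons_cons (a b : ℕ) (t : List ℕ) (hba : b ≤ a) (hs : (b :: t).Pairwise (· ≥ ·)) :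
    gammaSum (a :: b :: t) = (a - b) + gammaSum t := by
  rw [List.pairwise_cons] at hs
  have h := Esum_le_Osum t hs.2
  simp only [gammaSum, Osum_cons, Esum_cons]
  omega

lemma gammaSum_single (a : ℕ) : gammaSum [a] = a := by
  simp [gammaSum, Osum_cons, Esum_nil, Esum_cons, Osum_nil]

lemma length_le_two_osum : ∀ l : List ℕ, (∀ x ∈ l, 0 < x) → l.length ≤ 2 * Osum l
  | [] => by simp [Osum_nil]
  | [a] => by intro h; have := h a (by simp); simp [Osum, sumAlt]; omega
  | a :: b :: t => by
    intro h
    have ht := length_le_two_osum t (fun x hx => h x (by simp [hx]))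
    have ha := h a (by simp)
    simp only [List.length_cons]
    have : Osum (a :: b :: t) = a + Osum t := by simp [Osum, sumAlt]
    omega

def S (N n : ℕ) : Set (List ℕ) :=
  {l : List ℕ | IsPartition l ∧ (∀ x ∈ l, x ≤ N) ∧ Osum l = n}

lemma osum_head_le (a : ℕ) (t : List ℕ) : a ≤ Osum (a :: t) := by
  rw [Osum_cons]; omega

lemma entries_le_osum (l : List ℕ) (hs : l.Pairwise (· ≥ ·)) (x : ℕ) (hx : x ∈ l) :
    x ≤ Osum l := by
  cases l with
  | nil => simp at hx
  | cons a t =>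
    rcases List.mem_cons.1 hx with rfl | hxt
    · exact osum_head_le x t
    · exact le_trans ((List.pairwise_cons.1 hs).1 x hxt) (osum_head_le a t)

lemma S_finite (N n : ℕ) : (S N n).Finite := by
  have h1 : S N n ⊆ (fun l : List (Fin (n+1)) => l.map Fin.val) ''
      {l : List (Fin (n+1)) | l.length ≤ 2 * n} := by
    intro l hl
    obtain ⟨⟨hsort, hpos⟩, _, hosum⟩ := hl
    have hle : ∀ x ∈ l, x < n + 1 := fun x hx =>
      Nat.lt_succ_of_le (hosum ▸ entries_le_osum l hsort x hx)
    refine ⟨l.attach.map (fun x => ⟨x.1, hle x.1 x.2⟩), ?_, ?_⟩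
    · have := length_le_two_osum l hpos
      simpa using by omega
    · simp [List.map_map, Function.comp]
  exact Set.Finite.subset ((List.finite_length_le (Fin (n+1)) (2*n)).image _) h1

/-! ### decomposition -/

noncomputable def Acoef (N n : ℕ) : Polynomial ℤ := ∑ᶠ l ∈ S N n, (Polynomial.X : Polynomial ℤ) ^ gammaSum l

lemma S_zero (n : ℕ) (l : List ℕ) (hl : l ∈ S 0 n) : l = [] ∧ n = 0 := by
  obtain ⟨⟨_, hpos⟩, hle, hosum⟩ := hl
  cases l with
  | nil => exact ⟨rfl, by simpa [Osum_nil] using hosum.symm⟩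
  | cons a t => exact absurd (hle a (by simp)) (by have := hpos a (by simp); omega)

lemma Acoef_zero (n : ℕ) : Acoef 0 n = if n = 0 then 1 else 0 := by
  rcases eq_or_ne n 0 with rfl | hn
  · have : S 0 0 = {[]} := by
      ext l
      constructor
      · intro hl; exact (S_zero 0 l hl).1
      · rintro rfl
        exact ⟨⟨List.Pairwise.nil, by simp⟩, by simp, rfl⟩
    simp [Acoef, this, finsum_mem_singleton, gammaSum, Osum_nil, Esum_nil]
  · have : S 0 n = ∅ := by
      ext l
      simp only [Set.mem_empty_iff_false, iff_false]
      intro hl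
      exact hn (S_zero n l hl).2
    simp [Acoef, this, hn]

def Tset (N n : ℕ) : Set (List ℕ) := {l | l ∈ S N n ∧ l.head? = some N}

def Ecat (N b : ℕ) (l : List ℕ) : List ℕ := if b = 0 then [N] else N :: b :: l

lemma S_split (M n : ℕ) : S (M+1) n = S M n ∪ Tset (M+1) n := by
  ext l
  constructor
  · intro hl
    obtain ⟨⟨hsort, hpos⟩, hle, hosum⟩ := hl
    cases l with
    | nil => exact Or.inl ⟨⟨List.Pairwise.nil, by simp⟩, by simp, hosum⟩
    | cons a t =>
      rcases eq_or_ne a (M+1) with rfl | ha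
      · exact Or.inr ⟨⟨⟨hsort, hpos⟩, hle, hosum⟩, rfl⟩
      · refine Or.inl ⟨⟨hsort, hpos⟩, ?_, hosum⟩
        intro x hx
        have hxa : x ≤ a := by
          rcases List.mem_cons.1 hx with rfl | hxt
          · exact le_refl x
          · exact (List.pairwise_cons.1 hsort).1 x hxt
        have := hle a (by simp)
        omega
  · rintro (⟨hp, hle, hosum⟩ | ⟨hl, _⟩)
    · exact ⟨hp, fun x hx => le_trans (hle x hx) (by omega), hosum⟩
    · exact hl

lemma disj_split (M n : ℕ) : Disjoint (S M n) (Tset (M+1) n) := by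
  rw [Set.disjoint_left]
  rintro l ⟨_, hle, _⟩ ⟨_, hhead⟩
  cases l with
  | nil => simp at hhead
  | cons a t =>
    simp only [List.head?_cons, Option.some.injEq] at hhead
    have := hle a (by simp)
    omega

lemma Tset_empty (N n : ℕ) (h : n < N) : Tset N n = ∅ := by
  ext l
  simp only [Set.mem_empty_iff_false, iff_false]
  rintro ⟨⟨_, _, hosum⟩, hhead⟩
  cases l with
  | nil => simp at hhead
  | cons a t =>
    simp only [List.head?_cons, Option.some.injEq] at hhead
    subst hhead
    have := osum_head_le a t
    omega

lemma Tset_eq_biUnion (M n : ℕ) (hn : M + 1 ≤ n) :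
    Tset (M+1) n = ⋃ b ∈ (↑(Finset.range (M+2)) : Set ℕ), Ecat (M+1) b '' S b (n-(M+1)) := by
  set N := M + 1 with hN
  ext l
  simp only [Set.mem_iUnion, Finset.coe_range, Set.mem_Iio, exists_prop]
  constructor
  · rintro ⟨⟨⟨hsort, hpos⟩, hle, hosum⟩, hhead⟩
    cases l with
    | nil => simp at hhead
    | cons a t =>
      simp only [List.head?_cons, Option.some.injEq] at hhead
      subst hhead
      cases t with
      | nil =>
        refine ⟨0, by omega, [], ?_, by simp [Ecat]⟩
        have : n = N := by rw [← hosum, Osum_cons, Esum_nil]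
        refine ⟨⟨List.Pairwise.nil, by simp⟩, by simp, by simp [Osum_nil]; omega⟩
      | cons b r =>
        have hsort' := List.pairwise_cons.1 hsort
        have hsort'' := List.pairwise_cons.1 hsort'.2
        have hb0 : 0 < b := hpos b (by simp)
        refine ⟨b, ?_, r, ⟨⟨hsort''.2, fun x hx => hpos x (by simp [hx])⟩,
            fun x hx => hsort''.1 x hx, ?_⟩, by simp [Ecat, Nat.pos_iff_ne_zero.1 hb0]⟩
        · have := hsort'.1 b (by simp); omega
        · have : Osum (N :: b :: r) = N + Osum r := by
            rw [Osum_cons, Esum_cons]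
          omega
  · rintro ⟨b, hb, r, hr, rfl⟩
    rcases eq_or_ne b 0 with rfl | hb0
    · obtain ⟨rfl, hm⟩ := S_zero _ r hr
      have hnN : n = N := by omega
      have hE : Ecat N 0 [] = [N] := by simp [Ecat]
      rw [hE]
      refine ⟨⟨⟨List.pairwise_singleton _ _, by intro x hx; simp at hx; omega⟩,
        by intro x hx; simp at hx; omega, ?_⟩, rfl⟩
      rw [Osum_cons, Esum_nil]; omega
    · obtain ⟨⟨hsort, hpos⟩, hle, hosum⟩ := hr
      simp only [Ecat, if_neg hb0]
      refine ⟨⟨⟨?_, ?_⟩, ?_, ?_⟩, rfl⟩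
      · rw [List.pairwise_cons, List.pairwise_cons]
        refine ⟨?_, fun x hx => hle x hx, hsort⟩
        intro x hx
        rcases List.mem_cons.1 hx with rfl | hxt
        · omega
        · have := hle x hxt; omega
      · intro x hx
        rcases List.mem_cons.1 hx with rfl | hx
        · omega
        rcases List.mem_cons.1 hx with rfl | hx
        · omega
        · exact hpos x hx
      · intro x hx
        rcases List.mem_cons.1 hx with rfl | hx
        · omega
        rcases List.mem_cons.1 hx with rfl | hx
        · omega
        · have := hle x hx; omega
      · rw [Osum_cons, Esum_cons]
        omega

lemma Ecat_injOn (N b m : ℕ) : Set.InjOn (Ecat N b) (S b m) := by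
  rcases eq_or_ne b 0 with rfl | hb0
  · intro l hl l' hl' _
    rw [(S_zero m l hl).1, (S_zero m l' hl').1]
  · intro l _ l' _ h
    simpa [Ecat, if_neg hb0] using h

lemma Ecat_weight (N b m : ℕ) (hbN : b ≤ N) (l : List ℕ) (hl : l ∈ S b m) :
    (Polynomial.X : Polynomial ℤ) ^ gammaSum (Ecat N b l) =
      (Polynomial.X : Polynomial ℤ) ^ (N - b) * Polynomial.X ^ gammaSum l := by
  rcases eq_or_ne b 0 with rfl | hb0
  · obtain ⟨rfl, _⟩ := S_zero m l hl
    have h1 : Ecat N 0 [] = [N] := by simp [Ecat]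
    rw [h1, gammaSum_single]
    simp [gammaSum, Osum_nil, Esum_nil]
  · obtain ⟨⟨hsort, hpos⟩, hle, _⟩ := hl
    have hsbl : (b :: l).Pairwise (· ≥ ·) := List.pairwise_cons.2 ⟨fun x hx => hle x hx, hsort⟩
    rw [Ecat, if_neg hb0, gammaSum_cons_cons N b l hbN hsbl, pow_add]

lemma Ecat_ne (N b b' m : ℕ) (l l' : List ℕ) (hl : l ∈ S b m) (hl' : l' ∈ S b' m)
    (h : Ecat N b l = Ecat N b' l') : b = b' := by
  rcases eq_or_ne b 0 with rfl | hb0 <;> rcases eq_or_ne b' 0 with rfl | hb0'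
  · rfl
  · rw [Ecat, Ecat, if_pos rfl, if_neg hb0'] at h
    simp at h
  · rw [Ecat, Ecat, if_pos rfl, if_neg hb0] at h
    simp at h
  · simp only [Ecat, if_neg hb0, if_neg hb0', List.cons.injEq] at h
    exact h.2.1

lemma finsum_mem_finite_mul {α : Type*} {s : Set α} (hs : s.Finite) (c : Polynomial ℤ)
    (f : α → Polynomial ℤ) : ∑ᶠ x ∈ s, c * f x = c * ∑ᶠ x ∈ s, f x := by
  rw [← hs.coe_toFinset, finsum_mem_coe_finset, finsum_mem_coe_finset, Finset.mul_sum]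

lemma Acoef_succ (M n : ℕ) :
    Acoef (M+1) n = Acoef M n +
      (if M+1 ≤ n then
        ∑ b ∈ Finset.range (M+2), (Polynomial.X : Polynomial ℤ)^(M+1-b) * Acoef b (n-(M+1))
       else 0) := by
  by_cases hn : M + 1 ≤ n
  · rw [if_pos hn]
    have hdisj : ((Finset.range (M+2) : Finset ℕ) : Set ℕ).PairwiseDisjoint
        (fun b => Ecat (M+1) b '' S b (n-(M+1))) := by
      intro b _ b' _ hbb'
      rw [Function.onFun, Set.disjoint_left]
      rintro x ⟨l, hl, rfl⟩ ⟨l', hl', hx⟩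
      exact hbb' (Ecat_ne (M+1) b b' (n-(M+1)) l l' hl hl' hx.symm)
    have key : Acoef (M+1) n = Acoef M n + ∑ᶠ l ∈ Tset (M+1) n,
        (Polynomial.X : Polynomial ℤ) ^ gammaSum l := by
      rw [Acoef, S_split, finsum_mem_union (disj_split M n) (S_finite M n)
        (Set.Finite.subset (S_finite (M+1) n) (fun l hl => hl.1)), Acoef]
    rw [key, Tset_eq_biUnion M n hn,
      finsum_mem_biUnion hdisj (Finset.range (M+2)).finite_toSet
        (fun b _ => (S_finite b (n-(M+1))).image _),
      finsum_mem_coe_finset]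
    congr 1
    refine Finset.sum_congr rfl (fun b hb => ?_)
    rw [finsum_mem_image (Ecat_injOn (M+1) b (n-(M+1))),
      finsum_mem_congr rfl (fun l hl => Ecat_weight (M+1) b (n-(M+1))
        (by rw [Finset.mem_range] at hb; omega : b ≤ M+1) l hl),
      finsum_mem_finite_mul (S_finite b (n-(M+1))), Acoef]
  · rw [if_neg hn, add_zero, Acoef, Acoef, S_split, Tset_empty (M+1) n (by omega),
      Set.union_empty]



noncomputable def P (m : ℕ) : Polynomial ℤ := ∏ i ∈ Finset.range m, (1 - Polynomial.X ^ (i+1))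
noncomputable def Pr (a b : ℕ) : Polynomial ℤ := ∏ i ∈ Finset.Ico a b, (1 - Polynomial.X ^ (i+1))

lemma one_sub_X_pow_ne (i : ℕ) : (1 - Polynomial.X ^ (i+1) : Polynomial ℤ) ≠ 0 := by
  intro h
  have := congrArg (fun p => Polynomial.coeff p 0) h
  simp [Polynomial.coeff_X_pow] at this

lemma P_ne_zero (m : ℕ) : P m ≠ 0 :=
  Finset.prod_ne_zero_iff.2 fun i _ => one_sub_X_pow_ne i

lemma P_eq_Pr (m : ℕ) : P m = Pr 0 m := by
  rw [P, Pr, Finset.range_eq_Ico]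

lemma Pr_self (a : ℕ) : Pr a a = 1 := by simp [Pr]

lemma Pr_mul (a b c : ℕ) (h1 : a ≤ b) (h2 : b ≤ c) : Pr a b * Pr b c = Pr a c :=
  Finset.prod_Ico_consecutive _ h1 h2

lemma P_succ (m : ℕ) : P (m+1) = P m * (1 - Polynomial.X ^ (m+1)) := Finset.prod_range_succ _ _

lemma qbinom_zero_right (n : ℕ) : qbinom n 0 = 1 := by cases n <;> rfl

lemma qbinom_succ_succ (n k : ℕ) :
    qbinom (n+1) (k+1) = qbinom n k + Polynomial.X ^ (k+1) * qbinom n (k+1) := rfl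

lemma qbinom_eq_zero : ∀ n k : ℕ, n < k → qbinom n k = 0
  | 0, _+1, _ => rfl
  | n+1, k+1, h => by
    rw [qbinom_succ_succ, qbinom_eq_zero n k (by omega), qbinom_eq_zero n (k+1) (by omega)]
    ring

lemma qbinom_diag : ∀ n : ℕ, qbinom n n = 1
  | 0 => rfl
  | n+1 => by
    rw [qbinom_succ_succ, qbinom_diag n, qbinom_eq_zero n (n+1) (by omega)]
    ring

lemma L1 : ∀ n k : ℕ, k ≤ n → P k * P (n-k) * qbinom n k = P n := by
  intro n
  induction n with
  | zero => intro k hk; interval_cases k; simp [qbinom_zero_right, P]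
  | succ n ih =>
    intro k hk
    cases k with
    | zero => simp [qbinom_zero_right, P]
    | succ k =>
      have hkn : k ≤ n := by omega
      have hsub : n + 1 - (k+1) = n - k := by omega
      rw [hsub, qbinom_succ_succ, mul_add]
      rcases eq_or_lt_of_le hkn with rfl | hlt
      · rw [qbinom_eq_zero k (k+1) (by omega), qbinom_diag, Nat.sub_self]
        rw [P_succ k]
        have : P 0 = 1 := by simp [P]
        rw [this]
        ring_nf
      · -- k + 1 ≤ n
        have h1 : P (k+1) * P (n-k) * qbinom n k = (1 - Polynomial.X ^ (k+1)) * P n := by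
          rw [P_succ k]
          calc P k * (1 - Polynomial.X ^ (k+1)) * P (n-k) * qbinom n k
              = (1 - Polynomial.X ^ (k+1)) * (P k * P (n-k) * qbinom n k) := by ring
            _ = (1 - Polynomial.X ^ (k+1)) * P n := by rw [ih k hkn]
        have hnk : n - k = (n - (k+1)) + 1 := by omega
        have h2 : P (k+1) * P (n-k) * (Polynomial.X ^ (k+1) * qbinom n (k+1))
            = Polynomial.X ^ (k+1) * (1 - Polynomial.X ^ (n-k)) * P n := by
          rw [hnk, P_succ (n - (k+1))]
          have : P (k+1) * (P (n-(k+1)) * (1 - Polynomial.X ^ (n-(k+1)+1)))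
              * (Polynomial.X ^ (k+1) * qbinom n (k+1))
              = Polynomial.X ^ (k+1) * (1 - Polynomial.X ^ (n-(k+1)+1))
                * (P (k+1) * P (n-(k+1)) * qbinom n (k+1)) := by ring
          rw [this, ih (k+1) hlt, ← hnk]
        rw [h1, h2, P_succ n]
        have hx : Polynomial.X ^ (k+1) * Polynomial.X ^ (n-k) = (Polynomial.X : Polynomial ℤ) ^ (n+1) := by
          rw [← pow_add]
          congr 1
          omega
        calc (1 - Polynomial.X ^ (k+1)) * P n + Polynomial.X ^ (k+1) * (1 - Polynomial.X ^ (n-k)) * P n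
            = P n * (1 - Polynomial.X ^ (k+1) * Polynomial.X ^ (n-k)) := by ring
          _ = P n * (1 - Polynomial.X ^ (n+1)) := by rw [hx]

lemma L3 : ∀ k : ℕ, ∑ j ∈ Finset.range (k+1), Polynomial.X ^ j * Pr j k = 1 := by
  intro k
  induction k with
  | zero => simp [Pr_self]
  | succ k ih =>
    rw [Finset.sum_range_succ, Pr_self]
    have hsplit : ∀ j ∈ Finset.range (k+1), Polynomial.X ^ j * Pr j (k+1)
        = (Polynomial.X ^ j * Pr j k) * (1 - Polynomial.X ^ (k+1)) := by
      intro j hj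
      rw [Finset.mem_range] at hj
      rw [show Pr j (k+1) = Pr j k * (1 - Polynomial.X ^ (k+1)) from
        (Finset.prod_Ico_succ_top (by omega) _)]
      ring
    rw [Finset.sum_congr rfl hsplit, ← Finset.sum_mul, ih]
    ring

lemma L3' (k : ℕ) : ∑ j ∈ Finset.range k, Polynomial.X ^ j * Pr j k
    = 1 - Polynomial.X ^ k := by
  have h := L3 k
  rw [Finset.sum_range_succ, Pr_self, mul_one] at h
  linear_combination h

lemma L4 (M k : ℕ) (hk : k ≤ M + 1) :
    Polynomial.X ^ k * qbinom (M+1) k = Polynomial.X ^ k * qbinom M k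
      + Polynomial.X ^ (M+1) * ∑ j ∈ Finset.range k,
          Polynomial.X ^ j * Pr (M+1-k+j) M * qbinom (M+1-k+j) j := by
  have hM : (P k * P (M+1-k)) ≠ 0 := mul_ne_zero (P_ne_zero k) (P_ne_zero _)
  apply mul_left_cancel₀ hM
  have hLHS : P k * P (M+1-k) * (Polynomial.X ^ k * qbinom (M+1) k)
      = Polynomial.X ^ k * P (M+1) := by
    calc P k * P (M+1-k) * (Polynomial.X ^ k * qbinom (M+1) k)
        = Polynomial.X ^ k * (P k * P (M+1-k) * qbinom (M+1) k) := by ring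
      _ = Polynomial.X ^ k * P (M+1) := by rw [L1 (M+1) k hk]
  have hsum : P k * P (M+1-k) * (Polynomial.X ^ (M+1) * ∑ j ∈ Finset.range k,
      Polynomial.X ^ j * Pr (M+1-k+j) M * qbinom (M+1-k+j) j)
      = Polynomial.X ^ (M+1) * ((1 - Polynomial.X ^ k) * P M) := by
    have hterm : ∀ j ∈ Finset.range k,
        P k * P (M+1-k) * (Polynomial.X ^ j * Pr (M+1-k+j) M * qbinom (M+1-k+j) j)
        = Polynomial.X ^ j * Pr j k * P M := by
      intro j hj
      rw [Finset.mem_range] at hj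
      have hPk : P k = P j * Pr j k := by
        rw [P_eq_Pr, P_eq_Pr, ← Pr_mul 0 j k (Nat.zero_le _) (le_of_lt hj)]
      have hL1b : P j * P (M+1-k) * qbinom (M+1-k+j) j = P (M+1-k+j) := by
        have hsub : M+1-k+j - j = M+1-k := by omega
        have := L1 (M+1-k+j) j (by omega)
        rwa [hsub] at this
      have hPM : P (M+1-k+j) * Pr (M+1-k+j) M = P M := by
        rw [P_eq_Pr, P_eq_Pr]
        exact Pr_mul 0 _ M (Nat.zero_le _) (by omega)
      calc P k * P (M+1-k) * (Polynomial.X ^ j * Pr (M+1-k+j) M * qbinom (M+1-k+j) j)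
          = Polynomial.X ^ j * Pr j k * ((P j * P (M+1-k) * qbinom (M+1-k+j) j)
              * Pr (M+1-k+j) M) := by rw [hPk]; ring
        _ = Polynomial.X ^ j * Pr j k * (P (M+1-k+j) * Pr (M+1-k+j) M) := by rw [hL1b]
        _ = Polynomial.X ^ j * Pr j k * P M := by rw [hPM]
    calc P k * P (M+1-k) * (Polynomial.X ^ (M+1) * ∑ j ∈ Finset.range k,
          Polynomial.X ^ j * Pr (M+1-k+j) M * qbinom (M+1-k+j) j)
        = Polynomial.X ^ (M+1) * ∑ j ∈ Finset.range k,
            P k * P (M+1-k) * (Polynomial.X ^ j * Pr (M+1-k+j) M * qbinom (M+1-k+j) j) := by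
          rw [Finset.mul_sum, Finset.mul_sum, Finset.mul_sum]
          exact Finset.sum_congr rfl (fun j _ => by ring)
      _ = Polynomial.X ^ (M+1) * ∑ j ∈ Finset.range k, Polynomial.X ^ j * Pr j k * P M := by
          rw [Finset.sum_congr rfl hterm]
      _ = Polynomial.X ^ (M+1) * ((1 - Polynomial.X ^ k) * P M) := by
          rw [← Finset.sum_mul, L3']
  rw [hLHS, mul_add, hsum]
  rcases eq_or_lt_of_le hk with rfl | hlt
  · rw [qbinom_eq_zero M (M+1) (by omega)]
    rw [P_succ M]
    ring
  · have hkM : k ≤ M := by omega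
    have hT1 : P k * P (M+1-k) * (Polynomial.X ^ k * qbinom M k)
        = Polynomial.X ^ k * ((1 - Polynomial.X ^ (M+1-k)) * P M) := by
      have hnk : M+1-k = (M-k)+1 := by omega
      calc P k * P (M+1-k) * (Polynomial.X ^ k * qbinom M k)
          = Polynomial.X ^ k * ((1 - Polynomial.X ^ (M+1-k)) * (P k * P (M-k) * qbinom M k)) := by
            rw [hnk, P_succ (M-k), ← hnk]; ring
        _ = Polynomial.X ^ k * ((1 - Polynomial.X ^ (M+1-k)) * P M) := by rw [L1 M k hkM]
    rw [hT1, P_succ M]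
    have hx : Polynomial.X ^ k * Polynomial.X ^ (M+1-k) = (Polynomial.X : Polynomial ℤ) ^ (M+1) := by
      rw [← pow_add]; congr 1; omega
    linear_combination (P M) * hx

/-! ### Power series assembly -/

noncomputable section

def ψ : Polynomial ℤ →ₐ[ℤ] PowerSeries (Polynomial ℤ) := Polynomial.aeval PowerSeries.X

def qq : PowerSeries (Polynomial ℤ) := PowerSeries.X
def zz : PowerSeries (Polynomial ℤ) := PowerSeries.C (Polynomial.X : Polynomial ℤ)

def fS (N : ℕ) : PowerSeries (Polynomial ℤ) := PowerSeries.mk (fun n => Acoef N n)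
def R (N : ℕ) : PowerSeries (Polynomial ℤ) :=
  ∑ k ∈ Finset.range (N+1), qq^k * zz^k * ψ (qbinom N k)
def PA (N : ℕ) : PowerSeries (Polynomial ℤ) := ∏ i ∈ Finset.range N, (1 - qq^(i+1))

lemma ψ_X : ψ Polynomial.X = qq := Polynomial.aeval_X _
lemma ψ_X_pow (k : ℕ) : ψ (Polynomial.X ^ k) = qq^k := by rw [map_pow, ψ_X]

lemma PA_eq (m : ℕ) : PA m = ψ (P m) := by
  rw [PA, P, map_prod]
  exact Finset.prod_congr rfl fun i _ => by rw [map_sub, map_one, ψ_X_pow]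

lemma fS_zero : fS 0 = 1 := by
  ext n
  simp only [fS, PowerSeries.coeff_mk, Acoef_zero, PowerSeries.coeff_one]

lemma zz_pow_mul_coeff (k n : ℕ) (f : PowerSeries (Polynomial ℤ)) :
    PowerSeries.coeff n (zz^k * f) = Polynomial.X ^ k * PowerSeries.coeff n f := by
  rw [zz, ← map_pow, PowerSeries.coeff_C_mul]

lemma fS_succ (M : ℕ) :
    fS (M+1) = fS M + qq^(M+1) * ∑ b ∈ Finset.range (M+2), zz^(M+1-b) * fS b := by
  ext n
  rw [map_add, fS, fS, PowerSeries.coeff_mk, PowerSeries.coeff_mk, qq,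
    PowerSeries.coeff_X_pow_mul']
  have hc : ∀ m, (PowerSeries.coeff m)
      (∑ b ∈ Finset.range (M+2), zz^(M+1-b) * fS b)
      = ∑ b ∈ Finset.range (M+2), Polynomial.X ^ (M+1-b) * Acoef b m := by
    intro m
    rw [map_sum]
    exact Finset.sum_congr rfl fun b _ => by
      rw [zz_pow_mul_coeff, fS, PowerSeries.coeff_mk]
  rw [Acoef_succ M n]
  congr 1
  split_ifs with h
  · rw [hc]
  · rfl

lemma R_succ (M : ℕ) :
    R (M+1) = R M + qq^(M+1) * ∑ b ∈ Finset.range (M+1), zz^(M+1-b) * ψ (Pr b M) * R b := by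
  have hstep2 : qq^(M+1) * ∑ b ∈ Finset.range (M+1), zz^(M+1-b) * ψ (Pr b M) * R b
      = ∑ k ∈ Finset.range (M+2), zz^k * ψ (Polynomial.X ^ (M+1) * ∑ j ∈ Finset.range k,
          Polynomial.X ^ j * Pr (M+1-k+j) M * qbinom (M+1-k+j) j) := by
    have lhs_eq : qq^(M+1) * ∑ b ∈ Finset.range (M+1), zz^(M+1-b) * ψ (Pr b M) * R b
        = ∑ x ∈ (Finset.range (M+1)).sigma (fun b => Finset.range (b+1)),
            zz^(M+1-x.1+x.2) * (qq^(M+1) * qq^x.2 * ψ (Pr x.1 M * qbinom x.1 x.2)) := by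
      rw [← Finset.sum_sigma' (Finset.range (M+1)) (fun b => Finset.range (b+1))
        (fun b j => zz^(M+1-b+j) * (qq^(M+1) * qq^j * ψ (Pr b M * qbinom b j)))]
      simp only [R, Finset.mul_sum]
      apply Finset.sum_congr rfl
      intro b _
      apply Finset.sum_congr rfl
      intro j _
      have hz : zz^(M+1-b+j) = zz^(M+1-b) * zz^j := by rw [← pow_add]
      rw [hz, map_mul]
      ring
    have reindex : ∑ x ∈ (Finset.range (M+1)).sigma (fun b => Finset.range (b+1)),
            zz^(M+1-x.1+x.2) * (qq^(M+1) * qq^x.2 * ψ (Pr x.1 M * qbinom x.1 x.2))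
        = ∑ x ∈ (Finset.range (M+2)).sigma (fun k => Finset.range k),
            zz^x.1 * (qq^(M+1) * qq^x.2 * ψ (Pr (M+1-x.1+x.2) M * qbinom (M+1-x.1+x.2) x.2)) := by
      apply Finset.sum_nbij' (i := fun x => (⟨M+1-x.1+x.2, x.2⟩ : Σ _ : ℕ, ℕ))
        (j := fun x => (⟨M+1-x.1+x.2, x.2⟩ : Σ _ : ℕ, ℕ))
      · rintro ⟨b, j⟩ hx
        simp only [Finset.mem_sigma, Finset.mem_range] at hx ⊢
        omega
      · rintro ⟨k, j⟩ hx
        simp only [Finset.mem_sigma, Finset.mem_range] at hx ⊢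
        omega
      · rintro ⟨b, j⟩ hx
        simp only [Finset.mem_sigma, Finset.mem_range] at hx
        have h1 : M+1-(M+1-b+j)+j = b := by omega
        simp only [h1]
      · rintro ⟨k, j⟩ hx
        simp only [Finset.mem_sigma, Finset.mem_range] at hx
        have h1 : M+1-(M+1-k+j)+j = k := by omega
        simp only [h1]
      · rintro ⟨b, j⟩ hx
        simp only [Finset.mem_sigma, Finset.mem_range] at hx
        have h1 : M+1-(M+1-b+j)+j = b := by omega
        simp only [h1]
    rw [lhs_eq, reindex, Finset.sum_sigma]
    apply Finset.sum_congr rfl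
    intro k _
    simp only [map_mul, map_sum, ψ_X_pow, Finset.mul_sum]
    exact Finset.sum_congr rfl (fun j _ => by ring)
  rw [hstep2]
  have hRM : R M = ∑ k ∈ Finset.range (M+2), qq^k * zz^k * ψ (qbinom M k) := by
    rw [Finset.sum_range_succ, qbinom_eq_zero M (M+1) (by omega), map_zero, mul_zero,
      add_zero, R]
  rw [hRM, R, ← Finset.sum_add_distrib]
  apply Finset.sum_congr rfl
  intro k hk
  rw [Finset.mem_range] at hk
  have h4 := L4 M k (by omega)
  have := congrArg (fun p => zz^k * ψ p) h4
  simp only [map_add, map_mul, ψ_X_pow] at this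
  calc qq^k * zz^k * ψ (qbinom (M+1) k) = zz^k * (qq^k * ψ (qbinom (M+1) k)) := by ring
    _ = zz^k * (qq^k * ψ (qbinom M k)) + zz^k * (qq^(M+1) * ψ (∑ j ∈ Finset.range k,
          Polynomial.X ^ j * Pr (M+1-k+j) M * qbinom (M+1-k+j) j)) := by
        rw [this]; ring
    _ = qq^k * zz^k * ψ (qbinom M k) + zz^k * ψ (Polynomial.X ^ (M+1) * ∑ j ∈ Finset.range k,
          Polynomial.X ^ j * Pr (M+1-k+j) M * qbinom (M+1-k+j) j) := by
        rw [map_mul, ψ_X_pow]; ring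

lemma main : ∀ N, PA N * fS N = R N := by
  intro N
  induction N using Nat.strong_induction_on with
  | _ N ih =>
    match N with
    | 0 =>
      rw [fS_zero, mul_one, PA, R]
      simp [qbinom_zero_right]
    | M+1 =>
      have h := fS_succ M
      rw [Finset.sum_range_succ] at h
      have h2 : (1 - qq^(M+1)) * fS (M+1)
          = fS M + qq^(M+1) * ∑ b ∈ Finset.range (M+1), zz^(M+1-b) * fS b := by
        have hz : M+1-(M+1) = 0 := by omega
        rw [hz] at h
        linear_combination h
      have hPA : PA (M+1) = PA M * (1 - qq^(M+1)) := Finset.prod_range_succ _ _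
      have hb : ∀ b ∈ Finset.range (M+1), zz^(M+1-b) * ψ (Pr b M) * R b
          = zz^(M+1-b) * (PA M * fS b) := by
        intro b hbm
        rw [Finset.mem_range] at hbm
        rw [← ih b (by omega)]
        have hP : ψ (Pr b M) * PA b = PA M := by
          rw [PA_eq, PA_eq, ← map_mul]
          congr 1
          rw [P_eq_Pr, P_eq_Pr, mul_comm]
          exact Pr_mul 0 b M (Nat.zero_le _) (by omega)
        calc zz^(M+1-b) * ψ (Pr b M) * (PA b * fS b)
            = zz^(M+1-b) * ((ψ (Pr b M) * PA b) * fS b) := by ring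
          _ = zz^(M+1-b) * (PA M * fS b) := by rw [hP]
      rw [R_succ M, Finset.sum_congr rfl hb, ← ih M (by omega), hPA]
      calc PA M * (1 - qq^(M+1)) * fS (M+1)
          = PA M * ((1 - qq^(M+1)) * fS (M+1)) := by ring
        _ = PA M * (fS M + qq^(M+1) * ∑ b ∈ Finset.range (M+1), zz^(M+1-b) * fS b) := by
            rw [h2]
        _ = PA M * fS M + qq^(M+1) * ∑ b ∈ Finset.range (M+1), zz^(M+1-b) * (PA M * fS b) := by
            simp only [Finset.mul_sum, mul_add]
            refine congrArg (fun s => PA M * fS M + s) ?_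
            exact Finset.sum_congr rfl (fun b _ => by ring)

end

end PartGF

/-- In `ℤ[z]⟦q⟧` (with `q = PowerSeries.X` and `z = Polynomial.X` in the coefficients):
`(q;q)_N ∑_{π ∈ P_{≤N}} q^{O(π)} z^{γ(π)} = ∑_{k=0}^{N} q^k z^k [N choose k]_q`,
where the series on the left is defined coefficientwise. -/
theorem partitions_odd_alternating_gf (N : ℕ) :
    (∏ i ∈ Finset.range N, (1 - (PowerSeries.X : PowerSeries (Polynomial ℤ)) ^ (i + 1)))
      * PowerSeries.mk (fun n =>
          ∑ᶠ l ∈ {l : List ℕ | IsPartition l ∧ (∀ x ∈ l, x ≤ N) ∧ Osum l = n},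
            (Polynomial.X : Polynomial ℤ) ^ gammaSum l)
    = ∑ k ∈ Finset.range (N + 1),
        PowerSeries.X ^ k * (PowerSeries.C (Polynomial.X : Polynomial ℤ)) ^ k
          * Polynomial.aeval (PowerSeries.X : PowerSeries (Polynomial ℤ)) (qbinom N k) := by
  exact PartGF.main N
end
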